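/- arXiv:1311.2758 — 9 statements merged into one kernel-verified Lean document; each statement's English description precedes it below -/
import Mathlib

section
/- For two points τ and τ′ in the complex upper half-plane, there exists a nonzero complex number α such that α·(ℤ + ℤτ′) = ℤ + ℤτ (an equality of subgroups of ℂ) if and only if there exists a matrix (a b; c d) in SL(2,ℤ) with τ′ = (aτ + b)/(cτ + d). -/
/-- `1, τ` are independent over the integers (indeed over ℝ) when `τ ∈ ℍ`. -/
lemma indep_aux (τ : UpperHalfPlane) (e f : ℤ) (h : (e : ℂ) * (τ : ℂ) + (f : ℂ) = 0) :
    e = 0 ∧ f = 0 := by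
  have him := congrArg Complex.im h
  simp [Complex.add_im, Complex.mul_im] at him
  have hτ : (τ : ℂ).im ≠ 0 := ne_of_gt τ.im_pos
  have he : (e : ℝ) = 0 := by
    rcases him with h' | h' <;> simp_all
  have he' : e = 0 := by exact_mod_cast he
  refine ⟨he', ?_⟩
  have : (f : ℂ) = 0 := by
    rw [he'] at h; simpa using h
  exact_mod_cast this

/-- For two points `τ` and `τ'` in the upper half-plane, there exists a nonzero
complex number `α` with `α • (ℤ + ℤτ') = ℤ + ℤτ` if and only if `τ' = (aτ + b)/(cτ + d)` for
some matrix `(a b; c d) ∈ SL(2, ℤ)`. -/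
theorem stmt_0 (τ τ' : UpperHalfPlane) :
    (∃ α : ℂ, α ≠ 0 ∧
        (fun z : ℂ => α * z) '' {z : ℂ | ∃ m n : ℤ, z = (m : ℂ) + (n : ℂ) * (τ' : ℂ)} =
          {z : ℂ | ∃ m n : ℤ, z = (m : ℂ) + (n : ℂ) * (τ : ℂ)}) ↔
      (∃ g : Matrix.SpecialLinearGroup (Fin 2) ℤ,
        (τ' : ℂ) = ((g 0 0 : ℂ) * (τ : ℂ) + (g 0 1 : ℂ)) /
            ((g 1 0 : ℂ) * (τ : ℂ) + (g 1 1 : ℂ))) := by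
  constructor
  · rintro ⟨α, hα0, hα⟩
    -- α ∈ lattice of τ
    have hmemα : α ∈ {z : ℂ | ∃ m n : ℤ, z = (m : ℂ) + (n : ℂ) * (τ : ℂ)} := by
      rw [← hα]; exact ⟨1, ⟨1, 0, by push_cast; ring⟩, by simp⟩
    have hmemατ' : α * (τ' : ℂ) ∈ {z : ℂ | ∃ m n : ℤ, z = (m : ℂ) + (n : ℂ) * (τ : ℂ)} := by
      rw [← hα]; exact ⟨(τ' : ℂ), ⟨0, 1, by push_cast; ring⟩, rfl⟩
    obtain ⟨p, q, hpq⟩ := hmemα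
    obtain ⟨r, s, hrs⟩ := hmemατ'
    -- 1 and τ are in α · lattice τ'
    have h1 : (1 : ℂ) ∈ (fun z : ℂ => α * z) ''
        {z : ℂ | ∃ m n : ℤ, z = (m : ℂ) + (n : ℂ) * (τ' : ℂ)} := by
      rw [hα]; exact ⟨1, 0, by push_cast; ring⟩
    have hτmem : (τ : ℂ) ∈ (fun z : ℂ => α * z) ''
        {z : ℂ | ∃ m n : ℤ, z = (m : ℂ) + (n : ℂ) * (τ' : ℂ)} := by
      rw [hα]; exact ⟨0, 1, by push_cast; ring⟩
    obtain ⟨w1, ⟨m1, n1, rfl⟩, hw1⟩ := h1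
    obtain ⟨w2, ⟨m2, n2, rfl⟩, hw2⟩ := hτmem
    simp only at hw1 hw2
    -- turn into integer relations
    have e1 : (↑(m1 * q + n1 * s) : ℂ) * (τ : ℂ) + (↑(m1 * p + n1 * r - 1) : ℂ) = 0 := by
      push_cast
      linear_combination hw1 - (m1 : ℂ) * hpq - (n1 : ℂ) * hrs
    have e2 : (↑(m2 * q + n2 * s - 1) : ℂ) * (τ : ℂ) + (↑(m2 * p + n2 * r) : ℂ) = 0 := by
      push_cast
      linear_combination hw2 - (m2 : ℂ) * hpq - (n2 : ℂ) * hrs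
    obtain ⟨E2, E1⟩ := indep_aux τ _ _ e1
    obtain ⟨E4, E3⟩ := indep_aux τ _ _ e2
    -- determinant is a unit
    have hd : (s * p - r * q) * (m1 * n2 - n1 * m2) = 1 := by
      have h14 : (m1 * p + n1 * r) * (m2 * q + n2 * s) = 1 := by
        have : m1 * p + n1 * r = 1 := by omega
        have h4 : m2 * q + n2 * s = 1 := by omega
        rw [this, h4]; norm_num
      have h23 : (m1 * q + n1 * s) * (m2 * p + n2 * r) = 0 := by
        have : m1 * q + n1 * s = 0 := by omega
        rw [this]; ring
      linear_combination h14 - h23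
    have hunit : s * p - r * q = 1 ∨ s * p - r * q = -1 :=
      Int.isUnit_iff.mp (IsUnit.of_mul_eq_one _ hd)
    -- α = p + qτ ≠ 0
    have hαne : (p : ℂ) + (q : ℂ) * (τ : ℂ) ≠ 0 := by rw [← hpq]; exact hα0
    have hτ'eq : (τ' : ℂ) = ((r : ℂ) + (s : ℂ) * (τ : ℂ)) / ((p : ℂ) + (q : ℂ) * (τ : ℂ)) := by
      rw [eq_div_iff hαne]
      linear_combination hrs - (τ' : ℂ) * hpq
    -- sign of the imaginary part forces det = 1
    have hdetpos : (0 : ℝ) < s * p - r * q := by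
      have him : (τ' : ℂ).im =
          ((s * p - r * q : ℝ) * (τ : ℂ).im) / Complex.normSq ((p : ℂ) + (q : ℂ) * (τ : ℂ)) := by
        rw [hτ'eq, Complex.div_im]
        simp [Complex.normSq_apply]
        ring
      have h1 : (0 : ℝ) < (τ' : ℂ).im := τ'.im_pos
      have h2 : (0 : ℝ) < (τ : ℂ).im := τ.im_pos
      have h3 : (0 : ℝ) < Complex.normSq ((p : ℂ) + (q : ℂ) * (τ : ℂ)) :=
        Complex.normSq_pos.mpr hαne
      rw [him] at h1
      by_contra hle
      push_neg at hle
      have : ((s * p - r * q : ℝ) * (τ : ℂ).im) / Complex.normSq ((p : ℂ) + (q : ℂ) * (τ : ℂ)) ≤ 0 := by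
        apply div_nonpos_of_nonpos_of_nonneg
        · exact mul_nonpos_of_nonpos_of_nonneg hle h2.le
        · exact h3.le
      linarith
    have hdet1 : s * p - r * q = 1 := by
      rcases hunit with h | h
      · exact h
      · exfalso
        have : ((s * p - r * q : ℤ) : ℝ) > 0 := by exact_mod_cast hdetpos
        rw [h] at this; norm_num at this
    refine ⟨⟨!![s, r; q, p], by simp [Matrix.det_fin_two_of]; linarith⟩, ?_⟩
    show (τ' : ℂ) = ((s : ℂ) * (τ : ℂ) + (r : ℂ)) / ((q : ℂ) * (τ : ℂ) + (p : ℂ))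
    rw [hτ'eq]
    ring_nf
  · rintro ⟨g, hg⟩
    set a : ℤ := g 0 0 with ha
    set b : ℤ := g 0 1 with hb
    set c : ℤ := g 1 0 with hc
    set d : ℤ := g 1 1 with hd
    have hdet : a * d - b * c = 1 := by
      have := g.det_coe
      rwa [Matrix.det_fin_two] at this
    have hdenne : (c : ℂ) * (τ : ℂ) + (d : ℂ) ≠ 0 := by
      intro h0
      obtain ⟨hc0, hd0⟩ := indep_aux τ c d h0
      rw [hc0, hd0] at hdet; simp at hdet
    have hατ' : ((c : ℂ) * (τ : ℂ) + (d : ℂ)) * (τ' : ℂ) = (a : ℂ) * (τ : ℂ) + (b : ℂ) := by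
      rw [hg]; field_simp
    have hdet' : (a : ℂ) * (d : ℂ) - (b : ℂ) * (c : ℂ) = 1 := by exact_mod_cast hdet
    refine ⟨(c : ℂ) * (τ : ℂ) + (d : ℂ), hdenne, ?_⟩
    ext z
    simp only [Set.mem_image, Set.mem_setOf_eq]
    constructor
    · rintro ⟨w, ⟨m, n, rfl⟩, rfl⟩
      refine ⟨m * d + n * b, m * c + n * a, ?_⟩
      push_cast
      linear_combination (n : ℂ) * hατ'
    · rintro ⟨m', n', rfl⟩
      refine ⟨(↑(a * m' - b * n') : ℂ) + (↑(d * n' - c * m') : ℂ) * (τ' : ℂ),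
        ⟨a * m' - b * n', d * n' - c * m', rfl⟩, ?_⟩
      push_cast
      linear_combination ((d : ℂ) * n' - c * m') * hατ' + ((m' : ℂ) + (n' : ℂ) * (τ : ℂ)) * hdet'
end

section
/- The improper integral of 1/√(x³ − x) over the interval (1, ∞) equals Γ(1/4)² / (2√(2π)), where Γ is Euler's Gamma function; that is, ∫₁^∞ dx/√(x³ − x) = Γ(1/4)²/(2√(2π)). -/
open MeasureTheory

lemma beta_quarter_half :
    ∫ s in Set.Ioo (0:ℝ) 1, s ^ (-(3:ℝ)/4) * (1 - s) ^ (-(1:ℝ)/2) =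
      Real.Gamma (1/4) * Real.Gamma (1/2) / Real.Gamma (3/4) := by
  set r : ℝ := ∫ s in Set.Ioo (0:ℝ) 1, s ^ (-(3:ℝ)/4) * (1 - s) ^ (-(1:ℝ)/2) with hr
  have hbeta : Complex.betaIntegral (1/4) (1/2) = (r : ℂ) := by
    rw [Complex.betaIntegral, intervalIntegral.integral_of_le zero_le_one,
      MeasureTheory.integral_Ioc_eq_integral_Ioo]
    have step1 : ∫ t in Set.Ioo (0:ℝ) 1, (t:ℂ) ^ ((1:ℂ)/4 - 1) * ((1:ℂ) - t) ^ ((1:ℂ)/2 - 1) =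
        ∫ t in Set.Ioo (0:ℝ) 1, ((t ^ (-(3:ℝ)/4) * (1 - t) ^ (-(1:ℝ)/2) : ℝ) : ℂ) := by
      refine setIntegral_congr_fun measurableSet_Ioo fun x hx => ?_
      obtain ⟨hx0, hx1⟩ := hx
      rw [Complex.ofReal_mul, Complex.ofReal_cpow hx0.le, Complex.ofReal_cpow (by linarith)]
      push_cast
      norm_num
    rw [step1, hr]
    exact integral_ofReal
  have hmul := Complex.Gamma_mul_Gamma_eq_betaIntegral
    (s := 1/4) (t := 1/2) (by norm_num) (by norm_num)
  rw [hbeta] at hmul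
  norm_num at hmul
  have h14 : (1/4 : ℂ) = ((1/4 : ℝ) : ℂ) := by norm_num
  have h12 : (Complex.Gamma (1/2)) = ((Real.Gamma (1/2) : ℝ) : ℂ) := by
    rw [show (1/2 : ℂ) = ((1/2:ℝ):ℂ) by norm_num, Complex.Gamma_ofReal]
  have h34 : (3/4 : ℂ) = ((3/4 : ℝ) : ℂ) := by norm_num
  rw [h14, h34, h12, Complex.Gamma_ofReal, Complex.Gamma_ofReal,
    ← Complex.ofReal_mul, ← Complex.ofReal_mul, Complex.ofReal_inj] at hmul
  have h34pos : 0 < Real.Gamma (3/4) := Real.Gamma_pos_of_pos (by norm_num)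
  rw [hmul, mul_div_cancel_left₀ _ h34pos.ne']

/-- `∫₁^∞ dx/√(x³ − x) = Γ(1/4)² / (2√(2π))`. -/
theorem stmt_3 :
    ∫ x in Set.Ioi (1 : ℝ), 1 / Real.sqrt (x ^ 3 - x) =
      Real.Gamma (1 / 4) ^ 2 / (2 * Real.sqrt (2 * Real.pi)) := by
  set f : ℝ → ℝ := fun s => s ^ (-(1:ℝ)/2) with hf
  set f' : ℝ → ℝ := fun s => -(1/2) * s ^ (-(3:ℝ)/2) with hf'
  have hderiv : ∀ s ∈ Set.Ioo (0:ℝ) 1, HasDerivWithinAt f (f' s) (Set.Ioo 0 1) s := by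
    intro s hs
    have h := (Real.hasDerivAt_rpow_const (p := -(1:ℝ)/2) (Or.inl hs.1.ne')).hasDerivWithinAt
      (s := Set.Ioo (0:ℝ) 1)
    refine h.congr_deriv ?_
    rw [hf']
    norm_num
  have hinj : Set.InjOn f (Set.Ioo (0:ℝ) 1) := by
    intro a ha b hb h
    have ka : a = (f a) ^ (-2:ℝ) := by
      rw [hf, ← Real.rpow_mul ha.1.le]
      norm_num
    have kb : b = (f b) ^ (-2:ℝ) := by
      rw [hf, ← Real.rpow_mul hb.1.le]
      norm_num
    rw [ka, kb, h]
  have himg : f '' Set.Ioo 0 1 = Set.Ioi 1 := by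
    ext x
    constructor
    · rintro ⟨s, ⟨hs0, hs1⟩, rfl⟩
      exact (Real.one_lt_rpow_iff_of_pos hs0).mpr (Or.inr ⟨hs1, by norm_num⟩)
    · intro hx
      have hx0 : (0:ℝ) < x := lt_trans one_pos hx
      refine ⟨x ^ (-2:ℝ), ⟨Real.rpow_pos_of_pos hx0 _,
        Real.rpow_lt_one_of_one_lt_of_neg hx (by norm_num)⟩, ?_⟩
      show (x ^ (-2:ℝ)) ^ (-(1:ℝ)/2) = x
      rw [← Real.rpow_mul hx0.le]
      norm_num
  have hsub := integral_image_eq_integral_abs_deriv_smul measurableSet_Ioo hderiv hinj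
    (fun x => 1 / Real.sqrt (x ^ 3 - x))
  rw [himg] at hsub
  rw [hsub]
  have hcongr : ∫ s in Set.Ioo (0:ℝ) 1, |f' s| • (1 / Real.sqrt (f s ^ 3 - f s)) =
      ∫ s in Set.Ioo (0:ℝ) 1, (1/2) * (s ^ (-(3:ℝ)/4) * (1 - s) ^ (-(1:ℝ)/2)) := by
    refine setIntegral_congr_fun measurableSet_Ioo fun s hs => ?_
    obtain ⟨hs0, hs1⟩ := hs
    have h1s : (0:ℝ) < 1 - s := by linarith
    have h3 : (f s) ^ 3 = s ^ (-(3:ℝ)/2) := by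
      rw [hf, ← Real.rpow_natCast (s ^ (-(1:ℝ)/2)) 3, ← Real.rpow_mul hs0.le]
      norm_num
    have h1 : s ^ (-(3:ℝ)/2) * s = s ^ (-(1:ℝ)/2) := by
      rw [← Real.rpow_add_one hs0.ne']
      norm_num
    have e1 : (f s) ^ 3 - f s = s ^ (-(3:ℝ)/2) * (1 - s) := by
      rw [h3, hf]
      simp only
      rw [← h1]
      ring
    have hsq : Real.sqrt (s ^ (-(3:ℝ)/2)) = s ^ (-(3:ℝ)/4) := by
      rw [Real.sqrt_eq_rpow, ← Real.rpow_mul hs0.le]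
      norm_num
    have e2 : Real.sqrt (s ^ (-(3:ℝ)/2) * (1 - s)) = s ^ (-(3:ℝ)/4) * Real.sqrt (1 - s) := by
      rw [Real.sqrt_mul (Real.rpow_nonneg hs0.le _), hsq]
    have habs : |f' s| = (1/2) * s ^ (-(3:ℝ)/2) := by
      rw [hf']
      simp only
      rw [abs_mul, abs_of_nonneg (Real.rpow_nonneg hs0.le _)]
      norm_num
    have h4 : s ^ (-(3:ℝ)/2) = s ^ (-(3:ℝ)/4) * s ^ (-(3:ℝ)/4) := by
      rw [← Real.rpow_add hs0]
      norm_num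
    have h5 : (1 - s) ^ (-(1:ℝ)/2) = (Real.sqrt (1 - s))⁻¹ := by
      rw [show (-(1:ℝ)/2) = -(1/2 : ℝ) by norm_num, Real.rpow_neg h1s.le, Real.sqrt_eq_rpow]
    have hsqpos : 0 < Real.sqrt (1 - s) := Real.sqrt_pos.mpr h1s
    have hsp : 0 < s ^ (-(3:ℝ)/4) := Real.rpow_pos_of_pos hs0 _
    rw [smul_eq_mul, habs, e1, e2, h5, h4]
    field_simp
  rw [hcongr, MeasureTheory.integral_const_mul, beta_quarter_half]
  have hrefl := Real.Gamma_mul_Gamma_one_sub (1/4)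
  rw [show (1:ℝ) - 1/4 = 3/4 by norm_num, show Real.pi * (1/4) = Real.pi / 4 by ring,
    Real.sin_pi_div_four] at hrefl
  have hG : 0 < Real.Gamma (1/4) := Real.Gamma_pos_of_pos (by norm_num)
  have hH : 0 < Real.Gamma (3/4) := Real.Gamma_pos_of_pos (by norm_num)
  have h2 : Real.sqrt 2 > 0 := by positivity
  have hpi : Real.sqrt Real.pi > 0 := Real.sqrt_pos.mpr Real.pi_pos
  have hs2 : Real.sqrt 2 * Real.sqrt 2 = 2 := Real.mul_self_sqrt (by norm_num)
  have hspi : Real.sqrt Real.pi * Real.sqrt Real.pi = Real.pi := Real.mul_self_sqrt Real.pi_pos.le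
  rw [Real.Gamma_one_half_eq, show (2:ℝ) * Real.pi = 2 * Real.pi by ring,
    Real.sqrt_mul (by norm_num : (0:ℝ) ≤ 2)]
  have hrefl' : Real.Gamma (1/4) * Real.Gamma (3/4) * Real.sqrt 2 = 2 * Real.pi := by
    rw [hrefl]
    field_simp
  have key : Real.Gamma (3/4) = 2 * Real.pi / (Real.sqrt 2 * Real.Gamma (1/4)) := by
    field_simp
    linarith [hrefl']
  rw [key]
  field_simp
  linear_combination (Real.sqrt 2 ^ 2) * hspi +
    (Real.pi) * hs2
end

section
/- Let a and b be integers and set Δ₁ = a² − 4(b − 2). If Δ₁ is a perfect square (the square of an integer), then the polynomial P(x) = x⁴ + a x³ + b x² + a x + 1 is reducible over ℚ. -/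
open Polynomial

/-- If `Δ₁ = a² − 4(b − 2)` is a perfect square, then the reciprocal quartic
`x⁴ + a x³ + b x² + a x + 1` is reducible over `ℚ`. -/
theorem stmt_4 (a b : ℤ) (h : ∃ j : ℤ, a ^ 2 - 4 * (b - 2) = j ^ 2) :
    ¬ Irreducible
        (X ^ 4 + C (a : ℚ) * X ^ 3 + C (b : ℚ) * X ^ 2 + C (a : ℚ) * X + 1 : Polynomial ℚ) := by
  obtain ⟨j, hj⟩ := h
  have hjq : (j : ℚ) ^ 2 = (a : ℚ) ^ 2 - 4 * ((b : ℚ) - 2) := by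
    exact_mod_cast hj.symm
  set r : ℚ := ((a : ℚ) + j) / 2 with hr
  set s : ℚ := ((a : ℚ) - j) / 2 with hs
  have hsum : r + s = (a : ℚ) := by rw [hr, hs]; ring
  have hprod : r * s + 2 = (b : ℚ) := by
    rw [hr, hs]
    field_simp
    nlinarith [hjq]
  have key : (X ^ 4 + C (a : ℚ) * X ^ 3 + C (b : ℚ) * X ^ 2 + C (a : ℚ) * X + 1 : Polynomial ℚ)
      = (X ^ 2 + C r * X + 1) * (X ^ 2 + C s * X + 1) := by
    rw [← hsum, ← hprod]
    simp only [C_add, C_mul, map_ofNat]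
    ring
  intro hirr
  have hdeg1 : (X ^ 2 + C r * X + 1 : Polynomial ℚ).natDegree = 2 := by
    compute_degree!
  have hdeg2 : (X ^ 2 + C s * X + 1 : Polynomial ℚ).natDegree = 2 := by
    compute_degree!
  rcases hirr.isUnit_or_isUnit key with hu | hu <;>
    simpa [hdeg1, hdeg2] using natDegree_eq_zero_of_isUnit hu
end

section
/- Let a and b be integers such that the polynomial P(x) = x⁴ + a x³ + b x² + a x + 1 is irreducible over ℚ, Δ₁ = a² − 4(b − 2) is not a perfect square, and Δ₂ = (b + 2)² − 4a² is a perfect square. Then the splitting field K of P over ℚ has degree [K : ℚ] = 4 and the Galois group Gal(K/ℚ) is isomorphic to (ℤ/2ℤ) × (ℤ/2ℤ). -/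
open Polynomial IntermediateField

open Polynomial

section Aux

variable {L : Type*} [Field L] [Algebra ℚ L]

/-- An irreducible polynomial of degree ≥ 2 has no rational root. -/
lemma aux_no_rat_root (P : ℚ[X]) (hirr : Irreducible P) (hdeg : P.natDegree = 4)
    (q : ℚ) : P.eval q ≠ 0 := by
  intro hq
  obtain ⟨c, hc⟩ := dvd_iff_isRoot.mpr hq
  have hPne : P ≠ 0 := hirr.ne_zero
  have hcne : c ≠ 0 := by rintro rfl; simp at hc; exact hPne hc
  rcases hirr.isUnit_or_isUnit hc with h | h
  · exact (Polynomial.not_isUnit_X_sub_C q) h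
  · have h0 : c.natDegree = 0 := natDegree_eq_zero_of_isUnit h
    have : P.natDegree = 1 := by
      rw [hc, natDegree_mul (X_sub_C_ne_zero q) hcne, natDegree_X_sub_C, h0]
    omega

lemma aux_root_ne (a b : ℤ) (P : ℚ[X])
    (hP : P = X ^ 4 + C (a : ℚ) * X ^ 3 + C (b : ℚ) * X ^ 2 + C (a : ℚ) * X + 1)
    (hirr : Irreducible P) (hdeg : P.natDegree = 4) (t : L)
    (ht : t ^ 4 + (a : L) * t ^ 3 + (b : L) * t ^ 2 + (a : L) * t + 1 = 0) :
    t ≠ 0 ∧ t ≠ 1 ∧ t ≠ -1 := by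
  haveI : CharZero L := charZero_of_injective_algebraMap (algebraMap ℚ L).injective
  refine ⟨?_, ?_, ?_⟩
  · rintro rfl; simp at ht
  · rintro rfl
    have h1 : ((2 + 2 * a + b : ℤ) : L) = 0 := by push_cast; linear_combination ht
    have h2 : (2 + 2 * a + b : ℤ) = 0 := by exact_mod_cast h1
    refine aux_no_rat_root P hirr hdeg 1 ?_
    rw [hP]; simp
    have : ((2 + 2 * a + b : ℤ) : ℚ) = 0 := by exact_mod_cast h2
    push_cast at this ⊢; linear_combination this
  · rintro rfl
    have h1 : ((2 - 2 * a + b : ℤ) : L) = 0 := by push_cast; linear_combination ht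
    have h2 : (2 - 2 * a + b : ℤ) = 0 := by exact_mod_cast h1
    refine aux_no_rat_root P hirr hdeg (-1) ?_
    rw [hP]; simp
    have : ((2 - 2 * a + b : ℤ) : ℚ) = 0 := by exact_mod_cast h2
    push_cast at this ⊢; linear_combination this

end Aux

section Aux2

variable {L : Type*} [Field L] [Algebra ℚ L]

lemma aux_quad (a b : ℤ) (t : L) (ht0 : t ≠ 0)
    (ht : t ^ 4 + (a : L) * t ^ 3 + (b : L) * t ^ 2 + (a : L) * t + 1 = 0) :
    (t + t⁻¹) ^ 2 + (a : L) * (t + t⁻¹) + ((b : L) - 2) = 0 := by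
  field_simp
  linear_combination ht

/-- key identity: `(y₁² − 4)((a + y₁)² − 4) = Δ₂` whenever `y₁² + a y₁ + (b−2) = 0`. -/
lemma aux_key (a b j : ℤ) (hj : (b + 2) ^ 2 - 4 * a ^ 2 = j ^ 2) (y : L)
    (hy : y ^ 2 + (a : L) * y + ((b : L) - 2) = 0) :
    (y ^ 2 - 4) * (((a : L) + y) ^ 2 - 4) = (j : L) ^ 2 := by
  have hjL : ((b : L) + 2) ^ 2 - 4 * (a : L) ^ 2 = (j : L) ^ 2 := by
    have h := congrArg (fun x : ℤ => (x : L)) hj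
    push_cast at h
    linear_combination h
  linear_combination (y ^ 2 + (a : L) * y - (b : L) - 6) * hy + hjL

end Aux2

open IntermediateField

/-- If the reciprocal quartic `P = x⁴ + a x³ + b x² + a x + 1` is irreducible
over `ℚ`, `Δ₁ = a² − 4(b − 2)` is not a perfect square and `Δ₂ = (b + 2)² − 4a²` is a perfect
square, then the splitting field of `P` has degree `4` over `ℚ` and the Galois group is
isomorphic to `(ℤ/2ℤ) × (ℤ/2ℤ)`. -/
theorem stmt_5 (a b : ℤ) (P : Polynomial ℚ)
    (hP : P = X ^ 4 + C (a : ℚ) * X ^ 3 + C (b : ℚ) * X ^ 2 + C (a : ℚ) * X + 1)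
    (hirr : Irreducible P)
    (hΔ₁ : ¬ ∃ j : ℤ, a ^ 2 - 4 * (b - 2) = j ^ 2)
    (hΔ₂ : ∃ j : ℤ, (b + 2) ^ 2 - 4 * a ^ 2 = j ^ 2) :
    Module.finrank ℚ P.SplittingField = 4 ∧
      Nonempty (P.Gal ≃* Multiplicative (ZMod 2 × ZMod 2)) := by
  obtain ⟨j, hj⟩ := hΔ₂
  have hdeg : P.natDegree = 4 := by rw [hP]; compute_degree!
  have hPmonic : P.Monic := by
    have h2 : P = X ^ 4 + (C (a : ℚ) * X ^ 3 + C (b : ℚ) * X ^ 2 + C (a : ℚ) * X + 1) := by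
      rw [hP]; ring
    rw [h2]
    apply monic_X_pow_add
    have h3 : (C (a : ℚ) * X ^ 3 + C (b : ℚ) * X ^ 2 + C (a : ℚ) * X + 1 : ℚ[X]).degree ≤ 3 := by
      compute_degree
    exact lt_of_le_of_lt h3 (by norm_num)
  set L := P.SplittingField with hLdef
  have hsplits : (P.map (algebraMap ℚ L)).Splits := SplittingField.splits P
  have hd0 : P.degree ≠ 0 := by
    rw [degree_eq_natDegree hPmonic.ne_zero, hdeg]; exact_mod_cast (by norm_num)
  set r : L := rootOfSplits hsplits (by rwa [degree_map]) with hrdef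
  have hr : aeval r P = 0 := by
    rw [aeval_def, ← eval_map]; exact eval_rootOfSplits _ _
  have heval : ∀ t : L, aeval t P = t ^ 4 + (a : L) * t ^ 3 + (b : L) * t ^ 2 + (a : L) * t + 1 := by
    intro t
    have h4 := congrArg (aeval t) hP
    rw [h4]
    simp only [map_add, map_mul, map_pow, map_one, aeval_X, aeval_C, map_intCast]
  have hre : r ^ 4 + (a : L) * r ^ 3 + (b : L) * r ^ 2 + (a : L) * r + 1 = 0 := by
    rw [← heval r]; exact hr
  obtain ⟨hr0, hr1, hrm1⟩ := aux_root_ne a b P hP hirr hdeg r hre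
  have e2 : r * r⁻¹ = 1 := mul_inv_cancel₀ hr0
  have hw0 : r - r⁻¹ ≠ 0 := by
    intro hw
    have hfac : (r - 1) * (r + 1) = 0 := by linear_combination r * hw + e2
    rcases mul_eq_zero.mp hfac with h | h
    · exact hr1 (by linear_combination h)
    · exact hrm1 (by linear_combination h)
  have hy1 : (r + r⁻¹) ^ 2 + (a : L) * (r + r⁻¹) + ((b : L) - 2) = 0 := aux_quad a b r hr0 hre
  have hkey := aux_key a b j hj (r + r⁻¹) hy1
  set F := IntermediateField.adjoin ℚ {r} with hF
  have hrF : r ∈ F := IntermediateField.mem_adjoin_simple_self ℚ r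
  -- every root of the quartic lies in F
  have hmem : ∀ t : L, t ^ 4 + (a : L) * t ^ 3 + (b : L) * t ^ 2 + (a : L) * t + 1 = 0 → t ∈ F := by
    intro t ht
    obtain ⟨ht0, ht1, htm1⟩ := aux_root_ne a b P hP hirr hdeg t ht
    have hyt := aux_quad a b t ht0 ht
    have e1 : t * t⁻¹ = 1 := mul_inv_cancel₀ ht0
    have hfac : ((t + t⁻¹) - (r + r⁻¹)) * ((t + t⁻¹) + (r + r⁻¹) + (a : L)) = 0 := by
      linear_combination hyt - hy1
    rcases mul_eq_zero.mp hfac with h | h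
    · have hfac2 : (t - r) * (t - r⁻¹) = 0 := by
        linear_combination t * h - e1 + e2
      rcases mul_eq_zero.mp hfac2 with h2 | h2
      · rw [sub_eq_zero] at h2; rw [h2]; exact hrF
      · rw [sub_eq_zero] at h2; rw [h2]; exact F.inv_mem hrF
    · have ht' : t + t⁻¹ = -(a : L) - (r + r⁻¹) := by linear_combination h
      have hw2 : (r - r⁻¹) ^ 2 = (r + r⁻¹) ^ 2 - 4 := by linear_combination (-4 : L) * e2
      have hv2 : (t - t⁻¹) ^ 2 = (t + t⁻¹) ^ 2 - 4 := by linear_combination (-4 : L) * e1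
      have hAB : 2 * t + (a : L) + (r + r⁻¹) = t - t⁻¹ := by linear_combination h
      have hsq : (2 * t + (a : L) + (r + r⁻¹)) ^ 2 * (r - r⁻¹) ^ 2 = (j : L) ^ 2 := by
        rw [hAB, hv2, hw2, ht']
        linear_combination hkey
      have hfac3 : ((2 * t + (a : L) + (r + r⁻¹)) * (r - r⁻¹) - (j : L)) *
          ((2 * t + (a : L) + (r + r⁻¹)) * (r - r⁻¹) + (j : L)) = 0 := by
        linear_combination hsq
      have ew : (r - r⁻¹) * (r - r⁻¹)⁻¹ = 1 := mul_inv_cancel₀ hw0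
      have h2F : (2 : L) ∈ F := by exact_mod_cast IntermediateField.natCast_mem F 2
      have hexpr : ∀ c : L, c ∈ F → (c * (r - r⁻¹)⁻¹ - (a : L) - (r + r⁻¹)) / 2 ∈ F := fun c hc =>
        F.div_mem (F.sub_mem (F.sub_mem (F.mul_mem hc
          (F.inv_mem (F.sub_mem hrF (F.inv_mem hrF)))) (IntermediateField.intCast_mem F a))
          (F.add_mem hrF (F.inv_mem hrF))) h2F
      rcases mul_eq_zero.mp hfac3 with h3 | h3
      · have h2t : 2 * t = (j : L) * (r - r⁻¹)⁻¹ - (a : L) - (r + r⁻¹) := by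
          linear_combination (r - r⁻¹)⁻¹ * h3 - (2 * t + (a : L) + (r + r⁻¹)) * ew
        have htt : t = ((j : L) * (r - r⁻¹)⁻¹ - (a : L) - (r + r⁻¹)) / 2 := by
          linear_combination h2t / 2
        rw [htt]; exact hexpr _ (IntermediateField.intCast_mem F j)
      · have h2t : 2 * t = (-(j : L)) * (r - r⁻¹)⁻¹ - (a : L) - (r + r⁻¹) := by
          linear_combination (r - r⁻¹)⁻¹ * h3 - (2 * t + (a : L) + (r + r⁻¹)) * ew
        have htt : t = ((-(j : L)) * (r - r⁻¹)⁻¹ - (a : L) - (r + r⁻¹)) / 2 := by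
          linear_combination h2t / 2
        rw [htt]; exact hexpr _ (F.neg_mem (IntermediateField.intCast_mem F j))
  -- F is everything
  have hroots_sub : P.rootSet L ⊆ (F : Set L) := by
    intro x hx
    have hx0 : aeval x P = 0 := (mem_rootSet.mp hx).2
    rw [heval x] at hx0
    exact hmem x hx0
  have hFtop : F = ⊤ := by
    apply IntermediateField.toSubalgebra_injective
    rw [IntermediateField.top_toSubalgebra, eq_top_iff]
    refine le_trans (SplittingField.adjoin_rootSet (f := P)).ge ?_
    exact Algebra.adjoin_le hroots_sub
  have hint : IsIntegral ℚ r := ⟨P, hPmonic, by rwa [← aeval_def]⟩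
  have hmin : minpoly ℚ r = P := (minpoly.eq_of_irreducible_of_monic hirr hr hPmonic).symm
  have hfr : Module.finrank ℚ F = 4 := by
    rw [hF, IntermediateField.adjoin.finrank hint, hmin, hdeg]
  have hfin : Module.finrank ℚ L = 4 := by
    rw [← hfr, hFtop]; simp
  refine ⟨hfin, ?_⟩
  have hsep : P.Separable := hirr.separable
  have hcard : Fintype.card P.Gal = 4 := by
    rw [← Nat.card_eq_fintype_card, Polynomial.Gal.card_of_separable hsep]; exact hfin
  -- every element is determined by its value at r
  have hgen : ∀ σ : P.Gal, σ r = r → σ = 1 := by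
    intro σ hσ
    let E : IntermediateField ℚ L :=
      Subalgebra.toIntermediateField (AlgHom.equalizer (σ : L ≃ₐ[ℚ] L).toAlgHom (AlgHom.id ℚ L))
        (fun x hx => by
          have hx' : σ x = x := hx
          show σ x⁻¹ = x⁻¹
          rw [map_inv₀, hx'])
    have hFE : F ≤ E := adjoin_le_iff.mpr (Set.singleton_subset_iff.mpr (show σ r = r from hσ))
    have hall : ∀ x : L, σ x = x := fun x => (hFtop ▸ hFE) (IntermediateField.mem_top)
    exact AlgEquiv.ext hall
  have hmul : ∀ (σ τ : P.Gal) (x : L), (σ * τ) x = σ (τ x) := fun σ τ x => rfl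
  -- every element squares to 1
  have hsq : ∀ σ : P.Gal, σ ^ 2 = 1 := by
    intro σ
    have hte : (σ r) ^ 4 + (a : L) * (σ r) ^ 3 + (b : L) * (σ r) ^ 2 + (a : L) * (σ r) + 1 = 0 := by
      have hh := congrArg σ hre
      simp only [map_add, map_mul, map_pow, map_one, map_zero, map_intCast] at hh
      exact hh
    obtain ⟨ht0, ht1, htm1⟩ := aux_root_ne a b P hP hirr hdeg (σ r) hte
    have e1 : (σ r) * (σ r)⁻¹ = 1 := mul_inv_cancel₀ ht0
    have hyt := aux_quad a b (σ r) ht0 hte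
    have hfac : ((σ r + (σ r)⁻¹) - (r + r⁻¹)) * ((σ r + (σ r)⁻¹) + (r + r⁻¹) + (a : L)) = 0 := by
      linear_combination hyt - hy1
    rcases mul_eq_zero.mp hfac with h | h
    · have hfac2 : (σ r - r) * (σ r - r⁻¹) = 0 := by
        linear_combination (σ r) * h - e1 + e2
      rcases mul_eq_zero.mp hfac2 with h2 | h2
      · rw [sub_eq_zero] at h2
        rw [hgen σ h2, one_pow]
      · rw [sub_eq_zero] at h2
        refine hgen (σ ^ 2) ?_
        rw [pow_two, hmul, h2, map_inv₀, h2, inv_inv]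
    · -- σ (r + r⁻¹) = -a - (r + r⁻¹); show σ (σ r) ∈ {r, r⁻¹} and rule out r⁻¹
      have hue : (σ (σ r)) ^ 4 + (a : L) * (σ (σ r)) ^ 3 + (b : L) * (σ (σ r)) ^ 2 +
          (a : L) * (σ (σ r)) + 1 = 0 := by
        have hh := congrArg σ hte
        simp only [map_add, map_mul, map_pow, map_one, map_zero, map_intCast] at hh
        exact hh
      obtain ⟨hu0, hu1, hum1⟩ := aux_root_ne a b P hP hirr hdeg (σ (σ r)) hue
      have eu : (σ (σ r)) * (σ (σ r))⁻¹ = 1 := mul_inv_cancel₀ hu0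
      have husum : ((σ (σ r) + (σ (σ r))⁻¹) - (r + r⁻¹)) = 0 := by
        have hh := congrArg σ h
        simp only [map_add, map_sub, map_intCast, map_inv₀, map_zero] at hh
        linear_combination hh - h
      have hfac2 : (σ (σ r) - r) * (σ (σ r) - r⁻¹) = 0 := by
        linear_combination (σ (σ r)) * husum - eu + e2
      rcases mul_eq_zero.mp hfac2 with h2 | h2
      · rw [sub_eq_zero] at h2
        refine hgen (σ ^ 2) ?_
        rw [pow_two, hmul, h2]
      · exfalso
        rw [sub_eq_zero] at h2
        have hw2 : (r - r⁻¹) ^ 2 = (r + r⁻¹) ^ 2 - 4 := by linear_combination (-4 : L) * e2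
        have hv2 : (σ r - (σ r)⁻¹) ^ 2 = (σ r + (σ r)⁻¹) ^ 2 - 4 := by
          linear_combination (-4 : L) * e1
        have ht' : σ r + (σ r)⁻¹ = -(a : L) - (r + r⁻¹) := by linear_combination h
        have hwv : ((r - r⁻¹) * (σ r - (σ r)⁻¹)) ^ 2 = (j : L) ^ 2 := by
          rw [mul_pow, hw2, hv2, ht']
          linear_combination hkey
        have hσwv : σ ((r - r⁻¹) * (σ r - (σ r)⁻¹)) = -((r - r⁻¹) * (σ r - (σ r)⁻¹)) := by
          rw [map_mul, map_sub, map_sub, map_inv₀, map_inv₀, h2, inv_inv]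
          ring
        have hz : (r - r⁻¹) * (σ r - (σ r)⁻¹) = 0 := by
          rcases mul_eq_zero.mp (show ((r - r⁻¹) * (σ r - (σ r)⁻¹) - (j : L)) *
              ((r - r⁻¹) * (σ r - (σ r)⁻¹) + (j : L)) = 0 by linear_combination hwv) with h4 | h4
          · have hj1 : (r - r⁻¹) * (σ r - (σ r)⁻¹) = (j : L) := by linear_combination h4
            have hj2 : -((r - r⁻¹) * (σ r - (σ r)⁻¹)) = (j : L) := by
              rw [← hσwv, hj1, map_intCast]
            linear_combination (hj1 - hj2) / 2
          · have hj1 : (r - r⁻¹) * (σ r - (σ r)⁻¹) = -(j : L) := by linear_combination h4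
            have hj2 : -((r - r⁻¹) * (σ r - (σ r)⁻¹)) = -(j : L) := by
              rw [← hσwv, hj1, map_neg, map_intCast]
            linear_combination (hj1 - hj2) / 2
        rcases mul_eq_zero.mp hz with h5 | h5
        · exact hw0 h5
        · have hfac6 : (σ r - 1) * (σ r + 1) = 0 := by linear_combination (σ r) * h5 + e1
          rcases mul_eq_zero.mp hfac6 with h6 | h6
          · exact ht1 (by linear_combination h6)
          · exact htm1 (by linear_combination h6)
  have hexp : Monoid.exponent P.Gal = 2 := by
    have hdvd : Monoid.exponent P.Gal ∣ 2 := Monoid.exponent_dvd_of_forall_pow_eq_one hsq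
    rcases (Nat.dvd_prime Nat.prime_two).mp hdvd with h | h
    · exfalso
      have hone : ∀ g : P.Gal, g = 1 := fun g => by
        have hg := Monoid.pow_exponent_eq_one g
        rwa [h, pow_one] at hg
      have : Fintype.card P.Gal ≤ 1 :=
        Fintype.card_le_one_iff.mpr fun x y => by rw [hone x, hone y]
      omega
    · exact h
  haveI : IsKleinFour P.Gal := ⟨by rw [Nat.card_eq_fintype_card, hcard], hexp⟩
  exact IsKleinFour.nonempty_mulEquiv
end

section
/- Let a and b be integers such that the polynomial P(x) = x⁴ + a x³ + b x² + a x + 1 is irreducible over ℚ, neither Δ₁ = a² − 4(b − 2) nor Δ₂ = (b + 2)² − 4a² is a perfect square, and the product Δ₁Δ₂ is a perfect square. Then the splitting field K of P over ℚ has degree [K : ℚ] = 4 and the Galois group Gal(K/ℚ) is cyclic of order 4 (isomorphic to ℤ/4ℤ). -/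
open Polynomial

/-- If the reciprocal quartic `P = x⁴ + a x³ + b x² + a x + 1` is irreducible
over `ℚ`, neither `Δ₁ = a² − 4(b − 2)` nor `Δ₂ = (b + 2)² − 4a²` is a perfect square, and
`Δ₁Δ₂` is a perfect square, then the splitting field of `P` has degree `4` over `ℚ` and the
Galois group is cyclic of order `4`. -/
theorem stmt_6 (a b : ℤ) (P : Polynomial ℚ)
    (hP : P = X ^ 4 + C (a : ℚ) * X ^ 3 + C (b : ℚ) * X ^ 2 + C (a : ℚ) * X + 1)
    (hirr : Irreducible P)
    (hΔ₁ : ¬ ∃ j : ℤ, a ^ 2 - 4 * (b - 2) = j ^ 2)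
    (hΔ₂ : ¬ ∃ j : ℤ, (b + 2) ^ 2 - 4 * a ^ 2 = j ^ 2)
    (hΔ₁₂ : ∃ j : ℤ, (a ^ 2 - 4 * (b - 2)) * ((b + 2) ^ 2 - 4 * a ^ 2) = j ^ 2) :
    Module.finrank ℚ P.SplittingField = 4 ∧
      Nonempty (P.Gal ≃* Multiplicative (ZMod 4)) := by
  classical
  obtain ⟨j, hj⟩ := hΔ₁₂
  set K := P.SplittingField with hK
  haveI : IsSplittingField ℚ K P := Polynomial.IsSplittingField.splittingField P
  -- basic facts about P
  have hPmonic : P.Monic := by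
    rw [hP]; monicity!
  have hPdeg : P.natDegree = 4 := by
    rw [hP]; compute_degree!
  have hP0 : P ≠ 0 := hPmonic.ne_zero
  -- integer discriminant facts
  have hΔ₁0 : a ^ 2 - 4 * (b - 2) ≠ 0 := fun h => hΔ₁ ⟨0, by omega⟩
  have hΔ₂0 : (b + 2) ^ 2 - 4 * a ^ 2 ≠ 0 := fun h => hΔ₂ ⟨0, by omega⟩
  have hj0 : j ≠ 0 := by
    rintro rfl
    rcases mul_eq_zero.mp (by linarith [hj] : (a ^ 2 - 4 * (b - 2)) * ((b + 2) ^ 2 - 4 * a ^ 2) = 0) with h | h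
    · exact hΔ₁0 h
    · exact hΔ₂0 h
  -- no rational roots
  have hnoroot : ∀ r : ℚ, ¬ P.IsRoot r := by
    intro r hr
    have hdvd : (X - C r) ∣ P := dvd_iff_isRoot.mpr hr
    obtain ⟨q, hq⟩ := hdvd
    rcases hirr.isUnit_or_isUnit hq with h | h
    · exact (Polynomial.not_isUnit_X_sub_C r) h
    · have := Polynomial.natDegree_eq_zero_of_isUnit h
      have h4 : P.natDegree = (X - C r).natDegree + q.natDegree := by
        rw [hq, Polynomial.natDegree_mul (X_sub_C_ne_zero r) (fun h0 => by simp [h0] at hq; exact hP0 hq)]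
      rw [hPdeg, natDegree_X_sub_C, this] at h4
      omega
  -- the root α in K
  have hsplits : (P.map (algebraMap ℚ K)).Splits := SplittingField.splits P
  have hdeg0 : P.degree ≠ 0 := by
    rw [degree_eq_natDegree hP0, hPdeg]; exact_mod_cast (by norm_num)
  set α : K := rootOfSplits hsplits (by rwa [degree_map]) with hαdef
  have hαroot : aeval α P = 0 := by
    have := eval_rootOfSplits hsplits (by rwa [degree_map] : (P.map (algebraMap ℚ K)).degree ≠ 0)
    rwa [aeval_def, ← eval_map]
  -- notation
  set A : K := (a : K) with hA
  set B : K := (b : K) with hB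
  set J : K := (j : K) with hJ
  have hrel : α ^ 4 + A * α ^ 3 + B * α ^ 2 + A * α + 1 = 0 := by
    have h2 : aeval α (X ^ 4 + C (a : ℚ) * X ^ 3 + C (b : ℚ) * X ^ 2 + C (a : ℚ) * X + 1) = 0 :=
      (congrArg (aeval α) hP).symm.trans hαroot
    simpa [map_add, map_mul, map_pow, aeval_X, aeval_C] using h2
  have hα0 : α ≠ 0 := by
    intro h0
    rw [h0] at hrel
    simp at hrel
  -- cast facts
  have hJ0 : J ≠ 0 := by
    have : ((j : ℤ) : K) ≠ 0 := Int.cast_ne_zero.mpr hj0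
    simpa [hJ] using this
  have hΔ₁K : (A ^ 2 - 4 * (B - 2)) ≠ 0 := by
    have : ((a ^ 2 - 4 * (b - 2) : ℤ) : K) ≠ 0 := Int.cast_ne_zero.mpr hΔ₁0
    rw [Int.cast_sub, Int.cast_mul] at this
    simpa [hA, hB] using this
  have hjK : (A ^ 2 - 4 * (B - 2)) * ((B + 2) ^ 2 - 4 * A ^ 2) = J ^ 2 := by
    have : (((a ^ 2 - 4 * (b - 2)) * ((b + 2) ^ 2 - 4 * a ^ 2) : ℤ) : K) = ((j ^ 2 : ℤ) : K) :=
      congrArg (fun z : ℤ => (z : K)) hj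
    push_cast at this
    erw [Int.cast_mul, Int.cast_sub, Int.cast_sub, Int.cast_mul, Int.cast_mul] at this
    simpa [hA, hB, hJ] using this
  -- the inverse root i and β (introduced as opaque constants)
  obtain ⟨i, hidef⟩ : ∃ i : K, i = α⁻¹ := ⟨_, rfl⟩
  have hi : α * i = 1 := by rw [hidef]; exact mul_inv_cancel₀ hα0
  obtain ⟨β, hβdef⟩ : ∃ β : K, β = α + i := ⟨_, rfl⟩
  have hβ : β ^ 2 + A * β + (B - 2) = 0 := by
    have key : α ^ 2 * (β ^ 2 + A * β + (B - 2)) = 0 := by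
      rw [hβdef]
      linear_combination hrel + (2 * α ^ 2 + α * i + 1 + A * α) * hi
    exact (mul_eq_zero.mp key).resolve_left (pow_ne_zero 2 hα0)
  -- d = square root of Δ₁
  obtain ⟨d, hddef⟩ : ∃ d : K, d = 2 * β + A := ⟨_, rfl⟩
  have hd2 : d ^ 2 = A ^ 2 - 4 * (B - 2) := by
    rw [hddef]; linear_combination 4 * hβ
  have hd0 : d ≠ 0 := by
    intro h0
    apply hΔ₁K
    rw [← hd2, h0]; ring
  -- e = α - α⁻¹ ≠ 0 since ±1 are not roots of P
  obtain ⟨e, hedef⟩ : ∃ e : K, e = α - i := ⟨_, rfl⟩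
  have hratroot : ∀ r : ℚ, algebraMap ℚ K r ≠ α := by
    intro r hr
    apply hnoroot r
    have h2 := aeval_algebraMap_apply_eq_algebraMap_eval (A := K) r P
    rw [hr, hαroot] at h2
    exact (map_eq_zero_iff _ (algebraMap ℚ K).injective).mp h2.symm
  have hα1 : α ≠ 1 := fun h => hratroot 1 (by simpa using h.symm)
  have hαm1 : α ≠ -1 := fun h => hratroot (-1) (by simpa using h.symm)
  have he0 : e ≠ 0 := by
    intro h0
    have hsq : α ^ 2 = 1 := by
      have h1 : α * e = α ^ 2 - 1 := by rw [hedef]; linear_combination -hi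
      rw [h0, mul_zero] at h1
      linear_combination -h1
    have h2 : (α - 1) * (α + 1) = 0 := by linear_combination hsq
    rcases mul_eq_zero.mp h2 with h | h
    · exact hα1 (by linear_combination h)
    · exact hαm1 (by linear_combination h)
  have he2 : e ^ 2 = β ^ 2 - 4 := by
    rw [hedef, hβdef]; linear_combination (-4 : K) * hi
  -- f = square root of Δ₂, lying in ℚ(β)
  obtain ⟨f, hfdef⟩ : ∃ f : K, f = J * d⁻¹ := ⟨_, rfl⟩
  have hf : d * f = J := by
    rw [hfdef, mul_comm J _, ← mul_assoc, mul_inv_cancel₀ hd0, one_mul]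
  have hf2 : f ^ 2 = (B + 2) ^ 2 - 4 * A ^ 2 := by
    have h1 : (A ^ 2 - 4 * (B - 2)) * f ^ 2 = (A ^ 2 - 4 * (B - 2)) * ((B + 2) ^ 2 - 4 * A ^ 2) := by
      rw [hjK, ← hf]
      linear_combination -f ^ 2 * hd2
    exact mul_left_cancel₀ hΔ₁K h1
  have hf0 : f ≠ 0 := by
    intro h0
    rw [h0, mul_zero] at hf
    exact hJ0 hf.symm
  -- g = the square root of β'² - 4 where β' = -A - β
  obtain ⟨g, hgdef⟩ : ∃ g : K, g = f * e⁻¹ := ⟨_, rfl⟩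
  have hg : e * g = f := by
    rw [hgdef, mul_comm f _, ← mul_assoc, mul_inv_cancel₀ he0, one_mul]
  have hg2 : g ^ 2 = (-A - β) ^ 2 - 4 := by
    have h1 : e ^ 2 * g ^ 2 = e ^ 2 * ((-A - β) ^ 2 - 4) := by
      have h2 : e ^ 2 * g ^ 2 = f ^ 2 := by rw [← hg]; ring
      rw [h2, hf2, he2]
      linear_combination (-(β ^ 2 + A * β - B - 6)) * hβ
    exact mul_left_cancel₀ (pow_ne_zero 2 he0) h1
  -- γ : the second pair of roots
  obtain ⟨γ, hγdef⟩ : ∃ γ : K, γ = (-A - β + g) / 2 := ⟨_, rfl⟩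
  have hγq : γ ^ 2 - (-A - β) * γ + 1 = 0 := by
    rw [hγdef]; linear_combination hg2 / 4
  have hγ0 : γ ≠ 0 := by
    intro h0
    rw [h0] at hγq
    simp at hγq
  have hγi : γ * ((-A - β) - γ) = 1 := by linear_combination -hγq
  have hβ'q : (-A - β) ^ 2 + A * (-A - β) + (B - 2) = 0 := by linear_combination hβ
  have hrelγ : γ ^ 4 + A * γ ^ 3 + B * γ ^ 2 + A * γ + 1 = 0 := by
    linear_combination (γ ^ 2 + (A + (-A - β)) * γ + ((-A - β) ^ 2 + A * (-A - β) + B - 1)) * hγq +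
      ((-A - β) * γ - 1) * hβ'q
  -- factorization of P over K
  have hPmap : P.map (algebraMap ℚ K) = X ^ 4 + C A * X ^ 3 + C B * X ^ 2 + C A * X + 1 := by
    have h := congrArg (map (algebraMap ℚ K)) hP
    simpa only [Polynomial.map_add, Polynomial.map_mul, Polynomial.map_pow, Polynomial.map_X,
      Polynomial.map_C, Polynomial.map_one, map_intCast (algebraMap ℚ K), Polynomial.map_intCast] using h
  have hiC : (C α : K[X]) * C i = 1 := by rw [← C_mul, hi, C_1]
  have hγC : (C γ : K[X]) * (-C A - C β - C γ) = 1 := by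
    have := congrArg C hγi
    simpa only [map_mul, map_sub, map_neg, map_one] using this
  have hβC : (C β : K[X]) ^ 2 + C A * C β + (C B - 2) = 0 := by
    have := congrArg C hβ
    simpa only [map_add, map_mul, map_pow, map_sub, map_zero, map_ofNat] using this
  have hmC : (C β : K[X]) = C α + C i := by
    have := congrArg C hβdef
    simpa only [map_add] using this
  have hfact : P.map (algebraMap ℚ K) =
      (X - C α) * (X - C i) * (X - C γ) * (X - C (-A - β - γ)) := by
    erw [hPmap]
    simp only [map_sub, map_neg]
    linear_combination (X ^ 2 : K[X]) * hβC -
      (X * (X ^ 2 + (C A + C β) * X + 1)) * hmC -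
      (X ^ 2 + (C A + C β) * X + 1) * hiC -
      ((X - C α) * (X - C i)) * hγC
  -- classification of roots
  have hroots : ∀ x : K, aeval x P = 0 → x = α ∨ x = i ∨ x = γ ∨ x = -A - β - γ := by
    intro x hx
    have hev : (P.map (algebraMap ℚ K)).eval x = 0 := by
      rw [eval_map, ← aeval_def]; exact hx
    rw [hfact] at hev
    simp only [eval_mul, eval_sub, eval_X, eval_C, mul_eq_zero, sub_eq_zero] at hev
    rcases hev with ((h | h) | h) | h
    · exact Or.inl h
    · exact Or.inr (Or.inl h)
    · exact Or.inr (Or.inr (Or.inl h))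
    · exact Or.inr (Or.inr (Or.inr h))
  -- the splitting field is ℚ(α)
  set F : IntermediateField ℚ K := IntermediateField.adjoin ℚ {α} with hFdef
  have hαF : α ∈ F := IntermediateField.mem_adjoin_simple_self ℚ α
  have hiF : i ∈ F := by rw [hidef]; exact inv_mem hαF
  have hAF : A ∈ F := by rw [hA]; exact intCast_mem F a
  have hBF : B ∈ F := by rw [hB]; exact intCast_mem F b
  have hJF : J ∈ F := by rw [hJ]; exact intCast_mem F j
  have hβF : β ∈ F := by rw [hβdef]; exact add_mem hαF hiF
  have hdF : d ∈ F := by rw [hddef]; exact add_mem (mul_mem (natCast_mem F 2) hβF) hAF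
  have heF : e ∈ F := by rw [hedef]; exact sub_mem hαF hiF
  have hfF : f ∈ F := by rw [hfdef]; exact mul_mem hJF (inv_mem hdF)
  have hgF : g ∈ F := by rw [hgdef]; exact mul_mem hfF (inv_mem heF)
  have hγF : γ ∈ F := by
    rw [hγdef]
    exact div_mem (add_mem (sub_mem (neg_mem hAF) hβF) hgF) (natCast_mem F 2)
  have hrootsub : P.rootSet K ⊆ (F : Set K) := by
    intro x hx
    rcases hroots x (aeval_eq_zero_of_mem_rootSet hx) with h | h | h | h <;> rw [h]
    · exact hαF
    · exact hiF
    · exact hγF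
    · exact sub_mem (sub_mem (neg_mem hAF) hβF) hγF
  have hFtop : F = ⊤ := by
    have hle : (⊤ : Subalgebra ℚ K) ≤ F.toSubalgebra := by
      rw [← Polynomial.IsSplittingField.adjoin_rootSet K P]
      exact Algebra.adjoin_le hrootsub
    apply IntermediateField.toSubalgebra_injective
    rw [IntermediateField.top_toSubalgebra]
    exact le_antisymm le_top hle
  -- degree computation
  have hint : IsIntegral ℚ α := ⟨P, hPmonic, by rw [← aeval_def]; exact hαroot⟩
  have hmin : minpoly ℚ α = P := (minpoly.eq_of_irreducible_of_monic hirr hαroot hPmonic).symm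
  have hrank : Module.finrank ℚ K = 4 := by
    have h1 : Module.finrank ℚ F = 4 := by
      rw [hFdef, IntermediateField.adjoin.finrank hint, hmin, hPdeg]
    rw [hFtop] at h1
    rwa [IntermediateField.finrank_top'] at h1
  refine ⟨hrank, ?_⟩
  -- Galois group
  haveI hfd : FiniteDimensional ℚ K := Polynomial.IsSplittingField.finiteDimensional K P
  haveI hgal : IsGalois ℚ K := by haveI := Normal.of_isSplittingField (E := K) P; exact ⟨⟩
  have hcard : Fintype.card (K ≃ₐ[ℚ] K) = 4 := by
    rw [← Nat.card_eq_fintype_card, IsGalois.card_aut_eq_finrank ℚ K]; exact hrank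
  -- the element σ of the Galois group with σ α = γ
  have hγroot : aeval γ P = 0 := by
    rw [congrArg (aeval γ) hP]
    simp only [map_add, map_mul, map_pow, aeval_X, aeval_C, map_one, map_intCast]
    linear_combination hrelγ
  have hminγ : minpoly ℚ γ = P := (minpoly.eq_of_irreducible_of_monic hirr hγroot hPmonic).symm
  obtain ⟨σ, hσα⟩ : ∃ σ : K ≃ₐ[ℚ] K, σ α = γ := by
    have horb : γ ∈ MulAction.orbit (K ≃ₐ[ℚ] K) α :=
      (Normal.minpoly_eq_iff_mem_orbit (F := ℚ) (E := K)).mp (hminγ.trans hmin.symm)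
    obtain ⟨σ, hσ⟩ := horb
    exact ⟨σ, hσ⟩
  -- computations with σ
  have hσA : σ A = A := by rw [hA]; exact map_intCast σ a
  have hσB : σ B = B := by rw [hB]; exact map_intCast σ b
  have hσJ : σ J = J := by rw [hJ]; exact map_intCast σ j
  have hσi : σ i = -A - β - γ := by
    have h1 : γ * σ i = 1 := by rw [← hσα, ← map_mul, hi, map_one]
    exact mul_left_cancel₀ hγ0 (h1.trans hγi.symm)
  have hσβ : σ β = -A - β := by
    have h1 : σ β = σ α + σ i := by rw [hβdef, map_add]
    rw [h1, hσα, hσi]; ring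
  have hσd : σ d = -d := by
    rw [hddef, map_add, map_mul, hσβ, hσA, map_ofNat]; ring
  have hσf : σ f = -f := by
    have h1 : σ d * σ f = J := by rw [← map_mul, hf, hσJ]
    rw [hσd] at h1
    refine mul_left_cancel₀ (neg_ne_zero.mpr hd0) ?_
    linear_combination h1 - hf
  have hge : g = 2 * γ + A + β := by rw [hγdef]; ring
  have hσe : σ e = g := by
    have h1 : σ e = σ α - σ i := by rw [hedef, map_sub]
    rw [h1, hσα, hσi, hge]; ring
  have hσeg : g * σ g = -f := by
    have h1 : σ e * σ g = σ f := by rw [← map_mul, hg]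
    rw [hσe, hσf] at h1
    exact h1
  -- σ γ is a root of X² - βX + 1
  have hσγq : σ γ ^ 2 - β * σ γ + 1 = 0 := by
    have h1 := congrArg σ hγq
    simp only [map_add, map_sub, map_mul, map_pow, map_one, map_neg, map_zero] at h1
    rw [hσA, hσβ] at h1
    linear_combination h1
  have hcases : (σ γ - α) * (σ γ - i) = 0 := by
    linear_combination hσγq + (σ γ) * hβdef + hi
  have hσγ : σ γ = i := by
    rcases mul_eq_zero.mp hcases with h | h
    · exfalso
      have hc : σ γ = α := sub_eq_zero.mp h
      have hσg : σ g = e := by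
        have h2 := congrArg σ hge
        simp only [map_add, map_mul, map_ofNat] at h2
        rw [hc, hσA, hσβ] at h2
        rw [h2, hedef, hβdef]; ring
      rw [hσg] at hσeg
      have hf00 : f = 0 := by linear_combination (hσeg - hg) / 2
      exact hf0 hf00
    · exact sub_eq_zero.mp h
  -- σ has order 4
  have hine : i ≠ α := by
    intro h
    apply he0
    rw [hedef, h]; ring
  have hσ2 : σ ^ 2 ≠ 1 := by
    intro h
    apply hine
    have h1 := congrArg (fun τ : K ≃ₐ[ℚ] K => τ α) h
    simp only [pow_two, AlgEquiv.mul_apply, AlgEquiv.one_apply] at h1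
    rw [hσα, hσγ] at h1
    exact h1
  have hσ1 : orderOf σ ∣ 4 := by
    rw [← hcard]
    exact orderOf_dvd_card
  have horder : orderOf σ = 4 := by
    have hσ1' : orderOf σ ∣ 2 ^ 2 := by simpa using hσ1
    obtain ⟨k, hk, hn⟩ := (Nat.dvd_prime_pow Nat.prime_two).mp hσ1'
    interval_cases k
    · exfalso
      apply hσ2
      have : σ = 1 := orderOf_eq_one_iff.mp (by simpa using hn)
      rw [this]; simp
    · exfalso
      apply hσ2
      have : σ ^ orderOf σ = 1 := pow_orderOf_eq_one σ
      rwa [hn, pow_one] at this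
    · simpa using hn
  have hnatcard : Nat.card (K ≃ₐ[ℚ] K) = 4 := by
    rw [Nat.card_eq_fintype_card, hcard]
  haveI hcyc : IsCyclic (K ≃ₐ[ℚ] K) := isCyclic_of_orderOf_eq_card σ (by rw [hnatcard]; exact horder)
  have e0 := (zmodCyclicMulEquiv hcyc).symm
  exact ⟨hnatcard ▸ e0⟩
end

section
/- Let a and b be integers such that the polynomial P(x) = x⁴ + a x³ + b x² + a x + 1 is irreducible over ℚ and none of Δ₁ = a² − 4(b − 2), Δ₂ = (b + 2)² − 4a², and the product Δ₁Δ₂ is a perfect square. Then: (i) the splitting field K of P over ℚ has degree [K : ℚ] = 8 and Gal(K/ℚ) is isomorphic to the dihedral group of order 8; (ii) K contains exactly three quadratic subfields, namely ℚ(√Δ₁), ℚ(√Δ₂) and ℚ(√(Δ₁Δ₂)); and (iii) every intermediate field L with ℚ ⊊ L ⊆ K contains one of these three quadratic fields. -/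
open Polynomial IntermediateField

section Aux

variable {K : Type*} [Field K] [Algebra ℚ K]

private lemma aux_int_sq (m : ℤ) (q : ℚ) (h : (m : ℚ) = q ^ 2) : ∃ j : ℤ, m = j ^ 2 := by
  have hint : IsIntegral ℤ q := by
    refine ⟨X ^ 2 - C m, monic_X_pow_sub_C m two_ne_zero, ?_⟩
    simp only [eval₂_sub, eval₂_pow, eval₂_X, eval₂_C, Int.coe_castRingHom]
    rw [sub_eq_zero, ← h]; simp
  obtain ⟨j, hj⟩ := IsIntegrallyClosed.isIntegral_iff.mp hint
  refine ⟨j, ?_⟩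
  have hj' : (j : ℚ) = q := by exact_mod_cast hj
  rw [← hj'] at h
  exact_mod_cast h

private lemma aux_norm (Δ A B e f q : ℚ) (h1 : A * f + B * e = 0)
    (h2 : A * e + B * f * Δ = q) :
    q ^ 2 = (A ^ 2 - B ^ 2 * Δ) * (e ^ 2 - f ^ 2 * Δ) := by
  linear_combination (Δ * (A * f + B * e)) * h1 + (-(A * e + B * f * Δ + q)) * h2

private lemma aux_coords {F : IntermediateField ℚ K} {s : K} (hs : s ∉ F) {c d c' d' : K}
    (hc : c ∈ F) (hd : d ∈ F) (hc' : c' ∈ F) (hd' : d' ∈ F)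
    (h : c + d * s = c' + d' * s) : c = c' ∧ d = d' := by
  have hdd : d = d' := by
    by_contra hne
    apply hs
    have hsub : d - d' ≠ 0 := sub_ne_zero.mpr hne
    have hseq : s = (d - d')⁻¹ * (c' - c) := by
      field_simp
      linear_combination h
    rw [hseq]
    exact F.mul_mem (F.inv_mem (F.sub_mem hd hd')) (F.sub_mem hc' hc)
  refine ⟨?_, hdd⟩
  rw [hdd] at h
  exact add_right_cancel h

private lemma aux_quad_mem {F : IntermediateField ℚ K} {s : K} (hs2 : s * s ∈ F) (hs : s ∉ F)
    {x : K} (hx : x ∈ adjoin ℚ (↑F ∪ {s} : Set K)) :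
    ∃ c ∈ F, ∃ d ∈ F, x = c + d * s := by
  induction hx using adjoin_induction with
  | mem z hz =>
    rcases hz with hz | hz
    · exact ⟨z, hz, 0, F.zero_mem, by ring⟩
    · rcases hz with rfl
      exact ⟨0, F.zero_mem, 1, F.one_mem, by ring⟩
  | algebraMap q => exact ⟨algebraMap ℚ K q, F.algebraMap_mem q, 0, F.zero_mem, by ring⟩
  | add x y hx hy ihx ihy =>
    obtain ⟨c, hc, d, hd, rfl⟩ := ihx
    obtain ⟨c', hc', d', hd', rfl⟩ := ihy
    exact ⟨c + c', F.add_mem hc hc', d + d', F.add_mem hd hd', by ring⟩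
  | inv x hx ih =>
    obtain ⟨c, hc, d, hd, rfl⟩ := ih
    by_cases hd0 : d = 0
    · subst hd0
      exact ⟨c⁻¹, F.inv_mem hc, 0, F.zero_mem, by simp⟩
    · have hN0 : c * c - d * d * (s * s) ≠ 0 := by
        intro h0
        have hfac : (d * s - c) * (d * s + c) = 0 := by linear_combination -h0
        rcases mul_eq_zero.mp hfac with h | h
        · apply hs
          have hseq : s = c / d := by
            field_simp
            linear_combination h
          rw [hseq]; exact F.div_mem hc hd
        · apply hs
          have hseq : s = -c / d := by
            field_simp
            linear_combination h
          rw [hseq]; exact F.div_mem (F.neg_mem hc) hd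
      have hNmem : c * c - d * d * (s * s) ∈ F :=
        F.sub_mem (F.mul_mem hc hc) (F.mul_mem (F.mul_mem hd hd) hs2)
      refine ⟨c * (c * c - d * d * (s * s))⁻¹, F.mul_mem hc (F.inv_mem hNmem),
        -(d * (c * c - d * d * (s * s))⁻¹),
        F.neg_mem (F.mul_mem hd (F.inv_mem hNmem)), ?_⟩
      apply inv_eq_of_mul_eq_one_right
      have expand : (c + d * s) * (c * (c * c - d * d * (s * s))⁻¹ +
          -(d * (c * c - d * d * (s * s))⁻¹) * s) =
          (c * c - d * d * (s * s)) * (c * c - d * d * (s * s))⁻¹ := by ring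
      rw [expand, mul_inv_cancel₀ hN0]
  | mul x y hx hy ihx ihy =>
    obtain ⟨c, hc, d, hd, rfl⟩ := ihx
    obtain ⟨c', hc', d', hd', rfl⟩ := ihy
    exact ⟨c * c' + d * d' * (s * s), F.add_mem (F.mul_mem hc hc')
      (F.mul_mem (F.mul_mem hd hd') hs2), c * d' + d * c',
      F.add_mem (F.mul_mem hc hd') (F.mul_mem hd hc'), by ring⟩

private lemma aux_adjoin_simple_eq (s : K) :
    adjoin ℚ ({s} : Set K) = adjoin ℚ (↑(⊥ : IntermediateField ℚ K) ∪ {s} : Set K) := by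
  apply le_antisymm
  · exact adjoin.mono _ _ _ (Set.subset_union_right)
  · rw [adjoin_le_iff]
    apply Set.union_subset
    · intro x hx
      have : (⊥ : IntermediateField ℚ K) ≤ adjoin ℚ ({s} : Set K) := bot_le
      exact this hx
    · exact subset_adjoin ℚ _

private lemma aux_quad_mem_bot {s : K} (q : ℚ) (hq : s ^ 2 = algebraMap ℚ K q)
    (hs : s ∉ (⊥ : IntermediateField ℚ K)) {x : K} (hx : x ∈ adjoin ℚ ({s} : Set K)) :
    ∃ c d : ℚ, x = algebraMap ℚ K c + algebraMap ℚ K d * s := by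
  rw [aux_adjoin_simple_eq s] at hx
  have hs2 : s * s ∈ (⊥ : IntermediateField ℚ K) := by
    rw [← sq, hq]
    exact IntermediateField.algebraMap_mem _ q
  obtain ⟨c, hc, d, hd, rfl⟩ := aux_quad_mem hs2 hs hx
  obtain ⟨c', rfl⟩ := IntermediateField.mem_bot.mp hc
  obtain ⟨d', rfl⟩ := IntermediateField.mem_bot.mp hd
  exact ⟨c', d', rfl⟩

private lemma aux_coords_bot {s : K} (hs : s ∉ (⊥ : IntermediateField ℚ K)) {c d e f : ℚ}
    (h : algebraMap ℚ K c + algebraMap ℚ K d * s =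
      algebraMap ℚ K e + algebraMap ℚ K f * s) : c = e ∧ d = f := by
  have inj : Function.Injective (algebraMap ℚ K) := (algebraMap ℚ K).injective
  have := aux_coords (F := (⊥ : IntermediateField ℚ K)) hs
    (IntermediateField.algebraMap_mem _ c) (IntermediateField.algebraMap_mem _ d)
    (IntermediateField.algebraMap_mem _ e) (IntermediateField.algebraMap_mem _ f) h
  exact ⟨inj this.1, inj this.2⟩

/-- decomposition of a square in a quadratic field `ℚ(s)`. -/
private lemma aux_sq_dec {s : K} {m : ℚ} (hm : s ^ 2 = algebraMap ℚ K m)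
    (hs : s ∉ (⊥ : IntermediateField ℚ K)) {c d q : ℚ}
    (h : (algebraMap ℚ K c + algebraMap ℚ K d * s) ^ 2 = algebraMap ℚ K q) :
    (d = 0 ∧ q = c ^ 2) ∨ (c = 0 ∧ q = d ^ 2 * m) := by
  have key : algebraMap ℚ K (c ^ 2 + d ^ 2 * m) + algebraMap ℚ K (2 * c * d) * s =
      algebraMap ℚ K q + algebraMap ℚ K 0 * s := by
    push_cast [map_add, map_mul, map_pow, map_ofNat, map_zero]
    linear_combination h - (algebraMap ℚ K d) ^ 2 * hm
  obtain ⟨h1, h2⟩ := aux_coords_bot hs key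
  have hcd : c * d = 0 := by linarith
  rcases mul_eq_zero.mp hcd with hc | hd
  · right
    refine ⟨hc, ?_⟩
    rw [hc] at h1; nlinarith [h1]
  · left
    refine ⟨hd, ?_⟩
    rw [hd] at h1; nlinarith [h1]

private lemma aux_finrank_adjoin_sq [FiniteDimensional ℚ K] {s : K} (q : ℚ)
    (hq : s ^ 2 = algebraMap ℚ K q) (hs : s ∉ (⊥ : IntermediateField ℚ K)) :
    Module.finrank ℚ (adjoin ℚ ({s} : Set K)) = 2 := by
  have hint : IsIntegral ℚ s := .of_finite ℚ s
  have heq := IntermediateField.adjoin.finrank hint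
  have hrange : s ∉ (algebraMap ℚ K).range := by
    intro hmem
    exact hs (IntermediateField.mem_bot.mpr hmem)
  have h2 : 2 ≤ (minpoly ℚ s).natDegree := (minpoly.two_le_natDegree_iff hint).mpr hrange
  have hdvd : minpoly ℚ s ∣ X ^ 2 - C q := by
    apply minpoly.dvd
    simp [hq]
  have h3 : (minpoly ℚ s).natDegree ≤ 2 := by
    have := natDegree_le_of_dvd hdvd (monic_X_pow_sub_C q two_ne_zero).ne_zero
    simpa [natDegree_X_pow_sub_C] using this
  have : (minpoly ℚ s).natDegree = 2 := le_antisymm h3 h2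
  rw [heq, this]

private lemma aux_monic2 (m : ℚ[X]) (hm : m.Monic) (hd : m.natDegree = 2) :
    m = X ^ 2 + C (m.coeff 1) * X + C (m.coeff 0) := by
  have hlead : m.coeff 2 = 1 := by
    have := hm.leadingCoeff
    rwa [leadingCoeff, hd] at this
  ext n
  match n with
  | 0 => simp
  | 1 => simp [coeff_X_pow]
  | 2 => simp [hlead, coeff_X_pow]
  | (k + 3) =>
    have h1 : m.coeff (k + 3) = 0 := coeff_eq_zero_of_natDegree_lt (by omega)
    have : (2 : ℕ) ≠ k + 3 := by omega
    simp [h1, coeff_X_pow, this, Nat.succ_ne_zero]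

end Aux

section Dihedral

private def dihedralToPerm : DihedralGroup 4 →* Equiv.Perm (ZMod 4) where
  toFun g :=
    match g with
    | .r i => Equiv.subRight i
    | .sr i => Equiv.subLeft i
  map_one' := by
    show Equiv.subRight (0 : ZMod 4) = 1
    ext x
    simp
  map_mul' g h := by
    rcases g with i | i <;> rcases h with j | j <;> ext x <;>
      simp [DihedralGroup.r_mul_r, DihedralGroup.r_mul_sr, DihedralGroup.sr_mul_r,
        DihedralGroup.sr_mul_sr, Equiv.subRight_apply, Equiv.subLeft_apply,
        Equiv.Perm.mul_apply] <;> ring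

private lemma dihedralToPerm_injective : Function.Injective dihedralToPerm := by
  rw [injective_iff_map_eq_one]
  rintro (i | i) h
  · have h0 := Equiv.ext_iff.mp h 0
    simp [dihedralToPerm, Equiv.subRight_apply] at h0
    rw [show i = 0 from by simpa using h0]
    rfl
  · exfalso
    have h0 := Equiv.ext_iff.mp h 0
    have h1 := Equiv.ext_iff.mp h 1
    simp [dihedralToPerm, Equiv.subLeft_apply] at h0 h1
    rw [h0] at h1
    simp at h1
    exact absurd h1 (by decide)

private def permCongrMul {α β : Type*} (e : α ≃ β) : Equiv.Perm α ≃* Equiv.Perm β where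
  toEquiv := e.permCongr
  map_mul' σ τ := by
    ext x
    simp [Equiv.permCongr_apply, Equiv.Perm.mul_apply]

end Dihedral

set_option maxHeartbeats 1000000 in
set_option synthInstance.maxHeartbeats 100000 in
/-- If the reciprocal quartic `P = x⁴ + a x³ + b x² + a x + 1` is irreducible
over `ℚ` and none of `Δ₁`, `Δ₂`, `Δ₁Δ₂` is a perfect square, then: (i) the splitting field `K`
of `P` has degree `8` over `ℚ` and the Galois group is dihedral of order `8`; (ii) `K` contains
exactly three quadratic subfields, namely `ℚ(√Δ₁)`, `ℚ(√Δ₂)` and `ℚ(√(Δ₁Δ₂))`; (iii) every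
intermediate field `ℚ ⊊ L ⊆ K` contains one of these three quadratic fields. -/
theorem stmt_7 (a b : ℤ) (P : Polynomial ℚ)
    (hP : P = X ^ 4 + C (a : ℚ) * X ^ 3 + C (b : ℚ) * X ^ 2 + C (a : ℚ) * X + 1)
    (hirr : Irreducible P)
    (hΔ₁ : ¬ ∃ j : ℤ, a ^ 2 - 4 * (b - 2) = j ^ 2)
    (hΔ₂ : ¬ ∃ j : ℤ, (b + 2) ^ 2 - 4 * a ^ 2 = j ^ 2)
    (hΔ₁₂ : ¬ ∃ j : ℤ, (a ^ 2 - 4 * (b - 2)) * ((b + 2) ^ 2 - 4 * a ^ 2) = j ^ 2) :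
    Module.finrank ℚ P.SplittingField = 8 ∧
    Nonempty (P.Gal ≃* DihedralGroup 4) ∧
    ∃ s₁ s₂ s₃ : P.SplittingField,
      s₁ ^ 2 = ((a ^ 2 - 4 * (b - 2) : ℤ) : P.SplittingField) ∧
      s₂ ^ 2 = (((b + 2) ^ 2 - 4 * a ^ 2 : ℤ) : P.SplittingField) ∧
      s₃ ^ 2 = (((a ^ 2 - 4 * (b - 2)) * ((b + 2) ^ 2 - 4 * a ^ 2) : ℤ) : P.SplittingField) ∧
      adjoin ℚ {s₁} ≠ adjoin ℚ {s₂} ∧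
      adjoin ℚ {s₁} ≠ adjoin ℚ {s₃} ∧
      adjoin ℚ {s₂} ≠ adjoin ℚ {s₃} ∧
      {L : IntermediateField ℚ P.SplittingField | Module.finrank ℚ L = 2} =
        {adjoin ℚ {s₁}, adjoin ℚ {s₂}, adjoin ℚ {s₃}} ∧
      (∀ L : IntermediateField ℚ P.SplittingField, L ≠ ⊥ →
        adjoin ℚ {s₁} ≤ L ∨ adjoin ℚ {s₂} ≤ L ∨ adjoin ℚ {s₃} ≤ L) := by
  classical
  have hPmonic : P.Monic := by rw [hP]; monicity!
  have hdeg : P.natDegree = 4 := by rw [hP]; compute_degree!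
  have hP0 : P ≠ 0 := hPmonic.ne_zero
  have hsep : P.Separable := hirr.separable
  have hsplits : (P.map (algebraMap ℚ P.SplittingField)).Splits := SplittingField.splits P
  have inj : Function.Injective (algebraMap ℚ P.SplittingField) := (algebraMap ℚ P.SplittingField).injective
  have hcard4 : Fintype.card (P.rootSet P.SplittingField) = 4 := by
    rw [card_rootSet_eq_natDegree hsep hsplits, hdeg]
  have root_eq : ∀ x : P.SplittingField, x ∈ P.rootSet P.SplittingField →
      x ^ 4 + (a : P.SplittingField) * x ^ 3 + (b : P.SplittingField) * x ^ 2 + (a : P.SplittingField) * x + 1 = 0 := by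
    intro x hx
    have h0 := (mem_rootSet.mp hx).2
    have h0' : aeval x (X ^ 4 + C (a : ℚ) * X ^ 3 + C (b : ℚ) * X ^ 2 + C (a : ℚ) * X + 1) = 0 := by
      rw [← hP]; exact h0
    simpa [map_add, map_mul, map_pow, map_one, aeval_X, aeval_C, map_intCast] using h0'
  have root_ne_zero : ∀ x : P.SplittingField, x ∈ P.rootSet P.SplittingField → x ≠ 0 := by
    intro x hx h0
    have := root_eq x hx
    rw [h0] at this
    simp at this
  -- pick a root r
  obtain ⟨⟨r, hrmem⟩⟩ := Fintype.card_pos_iff.mp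
    (show 0 < Fintype.card (P.rootSet P.SplittingField) by rw [hcard4]; norm_num)
  have hr0 : r ≠ 0 := root_ne_zero r hrmem
  -- pick a second root r'
  have hex : ∃ x, x ∈ P.rootSet P.SplittingField ∧ x ≠ r ∧ x ≠ r⁻¹ := by
    by_contra hcon
    push_neg at hcon
    have hsub : (P.rootSet P.SplittingField : Set P.SplittingField) ⊆ {r, r⁻¹} := by
      intro x hx
      rcases eq_or_ne x r with h | h
      · exact Or.inl h
      · exact Or.inr (hcon x hx h)
    have h2 : (P.rootSet P.SplittingField).ncard ≤ 2 := by
      refine le_trans (Set.ncard_le_ncard hsub ((Set.finite_singleton _).insert _)) ?_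
      exact le_trans (Set.ncard_insert_le _ _) (by simp)
    rw [← Nat.card_coe_set_eq, Nat.card_eq_fintype_card, hcard4] at h2
    omega
  obtain ⟨r', hr'mem, hr'r, hr'rinv⟩ := hex
  have hr'0 : r' ≠ 0 := root_ne_zero r' hr'mem
  set y : P.SplittingField := r + r⁻¹ with hydef
  set y' : P.SplittingField := r' + r'⁻¹ with hy'def
  have hy : y ^ 2 + (a : P.SplittingField) * y + ((b : P.SplittingField) - 2) = 0 := by
    have h := root_eq r hrmem
    rw [hydef]
    field_simp
    linear_combination h
  have hy' : y' ^ 2 + (a : P.SplittingField) * y' + ((b : P.SplittingField) - 2) = 0 := by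
    have h := root_eq r' hr'mem
    rw [hy'def]
    field_simp
    linear_combination h
  have hyy' : y ≠ y' := by
    intro heq
    have hroot2 : r' * r' - y' * r' + 1 = 0 := by
      rw [hy'def]
      field_simp
      ring
    rw [← heq] at hroot2
    have hyr : r * y = r ^ 2 + 1 := by
      rw [hydef]
      field_simp
    have hrr : r * r⁻¹ = 1 := mul_inv_cancel₀ hr0
    have h5 : r * ((r' - r) * (r' - r⁻¹)) = 0 := by
      linear_combination r * hroot2 + r' * hyr + (r - r') * hrr
    rcases mul_eq_zero.mp h5 with h | h
    · exact hr0 h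
    · rcases mul_eq_zero.mp h with h' | h'
      · exact hr'r (sub_eq_zero.mp h')
      · exact hr'rinv (sub_eq_zero.mp h')
  have hsum : y + y' = -(a : P.SplittingField) := by
    have hfac : (y - y') * (y + y' + (a : P.SplittingField)) = 0 := by linear_combination hy - hy'
    rcases mul_eq_zero.mp hfac with h | h
    · exact absurd (sub_eq_zero.mp h) hyy'
    · linear_combination h
  have hprod : y * y' = (b : P.SplittingField) - 2 := by linear_combination y * hsum - hy
  set s1 : P.SplittingField := 2 * y + (a : P.SplittingField) with hs1def
  have hs1sq : s1 ^ 2 = (a : P.SplittingField) ^ 2 - 4 * ((b : P.SplittingField) - 2) := by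
    rw [hs1def]; linear_combination 4 * hy
  set t : P.SplittingField := r - r⁻¹ with htdef
  set t' : P.SplittingField := r' - r'⁻¹ with ht'def
  set u : P.SplittingField := y ^ 2 - 4 with hudef
  set u' : P.SplittingField := y' ^ 2 - 4 with hu'def
  have hu : t ^ 2 = u := by
    rw [htdef, hudef, hydef]
    field_simp
    ring
  have hu' : t' ^ 2 = u' := by
    rw [ht'def, hu'def, hy'def]
    field_simp
    ring
  set s2 : P.SplittingField := t * t' with hs2def
  set s3 : P.SplittingField := s1 * s2 with hs3def
  have hD2K : u * u' = ((b : P.SplittingField) + 2) ^ 2 - 4 * (a : P.SplittingField) ^ 2 := by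
    rw [hudef, hu'def]
    linear_combination (y * y' + (b : P.SplittingField) + 6) * hprod + (4 * (a : P.SplittingField) - 4 * (y + y')) * hsum
  have hs2sq : s2 ^ 2 = ((b : P.SplittingField) + 2) ^ 2 - 4 * (a : P.SplittingField) ^ 2 := by
    rw [hs2def, mul_pow, hu, hu']; exact hD2K
  have hs3sq : s3 ^ 2 = ((a : P.SplittingField) ^ 2 - 4 * ((b : P.SplittingField) - 2)) * (((b : P.SplittingField) + 2) ^ 2 - 4 * (a : P.SplittingField) ^ 2) := by
    rw [hs3def, mul_pow, hs1sq, hs2sq]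
  -- rational constants
  set D1q : ℚ := (a : ℚ) ^ 2 - 4 * ((b : ℚ) - 2) with hD1qdef
  set D2q : ℚ := ((b : ℚ) + 2) ^ 2 - 4 * (a : ℚ) ^ 2 with hD2qdef
  have hq1 : ∀ q : ℚ, D1q ≠ q ^ 2 := by
    intro q h
    exact hΔ₁ (aux_int_sq _ q (by rw [← h, hD1qdef]; push_cast; ring))
  have hq2 : ∀ q : ℚ, D2q ≠ q ^ 2 := by
    intro q h
    exact hΔ₂ (aux_int_sq _ q (by rw [← h, hD2qdef]; push_cast; ring))
  have hq12 : ∀ q : ℚ, D1q * D2q ≠ q ^ 2 := by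
    intro q h
    exact hΔ₁₂ (aux_int_sq _ q (by rw [← h, hD1qdef, hD2qdef]; push_cast; ring))
  have haq0 : (a : ℚ) ≠ 0 := by
    intro h
    have ha0 : a = 0 := by exact_mod_cast h
    exact hΔ₂ ⟨b + 2, by rw [ha0]; ring⟩
  have hD1ne : D1q ≠ 0 := fun h => hq1 0 (by rw [h]; ring)
  have hD2ne : D2q ≠ 0 := fun h => hq2 0 (by rw [h]; ring)
  have hs1alg : s1 ^ 2 = algebraMap ℚ P.SplittingField D1q := by
    rw [hs1sq, hD1qdef]
    simp only [map_sub, map_mul, map_pow, map_ofNat, map_intCast]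
  have hs2alg : s2 ^ 2 = algebraMap ℚ P.SplittingField D2q := by
    rw [hs2sq, hD2qdef]
    simp only [map_sub, map_add, map_mul, map_pow, map_ofNat, map_intCast]
  have hs3alg : s3 ^ 2 = algebraMap ℚ P.SplittingField (D1q * D2q) := by
    rw [hs3sq, hD1qdef, hD2qdef]
    simp only [map_sub, map_add, map_mul, map_pow, map_ofNat, map_intCast]
  have bot_of : ∀ (s : P.SplittingField) (qv : ℚ), s ^ 2 = algebraMap ℚ P.SplittingField qv → (∀ q : ℚ, qv ≠ q ^ 2) →
      s ∉ (⊥ : IntermediateField ℚ P.SplittingField) := by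
    intro s qv hs hq hmem
    obtain ⟨c, hc⟩ := IntermediateField.mem_bot.mp hmem
    apply hq c
    apply inj
    rw [map_pow, hc, ← hs]
  have hs1bot : s1 ∉ (⊥ : IntermediateField ℚ P.SplittingField) := bot_of s1 D1q hs1alg hq1
  have hs2bot : s2 ∉ (⊥ : IntermediateField ℚ P.SplittingField) := bot_of s2 D2q hs2alg hq2
  have hs3bot : s3 ∉ (⊥ : IntermediateField ℚ P.SplittingField) := bot_of s3 (D1q * D2q) hs3alg hq12
  -- u, u' in coordinates
  set E0 : ℚ := (D1q + (a : ℚ) ^ 2 - 16) / 4 with hE0def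
  set F0 : ℚ := -(a : ℚ) / 2 with hF0def
  have hcastE0 : algebraMap ℚ P.SplittingField E0 = ((((a:P.SplittingField)^2 - 4*((b:P.SplittingField)-2)) + (a:P.SplittingField)^2 - 16)/4) := by
    rw [hE0def, hD1qdef]
    simp only [map_div₀, map_sub, map_add, map_mul, map_pow, map_ofNat, map_intCast]
  have hcastF0 : algebraMap ℚ P.SplittingField F0 = -(a:P.SplittingField)/2 := by
    rw [hF0def]
    simp only [map_div₀, map_neg, map_ofNat, map_intCast]
  have huE : u = algebraMap ℚ P.SplittingField E0 + algebraMap ℚ P.SplittingField F0 * s1 := by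
    rw [hcastE0, hcastF0, hudef, hs1def]
    linear_combination hy
  have huE' : u' = algebraMap ℚ P.SplittingField E0 - algebraMap ℚ P.SplittingField F0 * s1 := by
    rw [hcastE0, hcastF0, hu'def, hs1def]
    linear_combination hy' - (a : P.SplittingField) * hsum
  have hEFnorm : E0 ^ 2 - F0 ^ 2 * D1q = D2q := by
    rw [hE0def, hF0def, hD1qdef, hD2qdef]; ring
  -- fields M1, M2
  set M1 : IntermediateField ℚ P.SplittingField := adjoin ℚ {s1} with hM1
  have hs1M1 : s1 ∈ M1 := mem_adjoin_simple_self ℚ s1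
  have h2M1 : (2 : P.SplittingField) ∈ M1 := by exact_mod_cast IntermediateField.natCast_mem M1 2
  have h4M1 : (4 : P.SplittingField) ∈ M1 := by exact_mod_cast IntermediateField.natCast_mem M1 4
  have haM1 : ((a : P.SplittingField)) ∈ M1 := IntermediateField.intCast_mem M1 a
  have hyM1 : y ∈ M1 := by
    have hy2 : y = (s1 - (a : P.SplittingField)) / 2 := by rw [hs1def]; ring
    rw [hy2]
    exact M1.div_mem (M1.sub_mem hs1M1 haM1) h2M1
  have hy'M1 : y' ∈ M1 := by
    have hy'2 : y' = -(a : P.SplittingField) - y := by linear_combination hsum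
    rw [hy'2]
    exact M1.sub_mem (M1.neg_mem haM1) hyM1
  have huM1 : u ∈ M1 := by
    rw [hudef, sq]; exact M1.sub_mem (M1.mul_mem hyM1 hyM1) h4M1
  have hu'M1 : u' ∈ M1 := by
    rw [hu'def, sq]; exact M1.sub_mem (M1.mul_mem hy'M1 hy'M1) h4M1
  have hfrM1 : Module.finrank ℚ M1 = 2 := by
    rw [hM1]; exact aux_finrank_adjoin_sq D1q hs1alg hs1bot
  set M2 : IntermediateField ℚ P.SplittingField := adjoin ℚ {r} with hM2
  have hrM2 : r ∈ M2 := mem_adjoin_simple_self ℚ r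
  have h2M2 : (2 : P.SplittingField) ∈ M2 := by exact_mod_cast IntermediateField.natCast_mem M2 2
  have hminr : minpoly ℚ r = P :=
    (minpoly.eq_of_irreducible_of_monic hirr ((mem_rootSet.mp hrmem).2) hPmonic).symm
  have hfrM2 : Module.finrank ℚ M2 = 4 := by
    rw [hM2, IntermediateField.adjoin.finrank (IsIntegral.of_finite ℚ r), hminr, hdeg]
  have hs1M2 : s1 ∈ M2 := by
    have : s1 = 2 * (r + r⁻¹) + (a : P.SplittingField) := by rw [hs1def, hydef]
    rw [this]
    exact M2.add_mem (M2.mul_mem h2M2 (M2.add_mem hrM2 (M2.inv_mem hrM2)))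
      (IntermediateField.intCast_mem M2 a)
  have hM1leM2 : M1 ≤ M2 := by rw [hM1]; exact adjoin_simple_le_iff.mpr hs1M2
  have htM2 : t ∈ M2 := by rw [htdef]; exact M2.sub_mem hrM2 (M2.inv_mem hrM2)
  have hreq : r = (t + y) / 2 := by rw [htdef, hydef]; ring
  have hM2eq : M2 = adjoin ℚ (↑M1 ∪ {t} : Set P.SplittingField) := by
    apply le_antisymm
    · rw [hM2, adjoin_simple_le_iff, hreq]
      refine div_mem (add_mem ?_ ?_) ?_
      · exact subset_adjoin _ _ (Or.inr rfl)
      · exact subset_adjoin _ _ (Or.inl hyM1)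
      · exact_mod_cast IntermediateField.natCast_mem _ 2
    · rw [adjoin_le_iff]
      apply Set.union_subset
      · exact fun x hx => hM1leM2 hx
      · simpa using htM2
  have htnotM1 : t ∉ M1 := by
    intro hmem
    have hrM1 : r ∈ M1 := by
      rw [hreq]; exact M1.div_mem (M1.add_mem hmem hyM1) h2M1
    have hle : M2 ≤ M1 := by rw [hM2]; exact adjoin_simple_le_iff.mpr hrM1
    have hsub : Subalgebra.toSubmodule M2.toSubalgebra ≤ Subalgebra.toSubmodule M1.toSubalgebra :=
      fun z hz => hle hz
    have hmono := Submodule.finrank_mono hsub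
    have e2 : Module.finrank ℚ (Subalgebra.toSubmodule M2.toSubalgebra) = 4 := hfrM2
    have e1 : Module.finrank ℚ (Subalgebra.toSubmodule M1.toSubalgebra) = 2 := hfrM1
    rw [e1, e2] at hmono
    omega
  have pow2mem : ∀ (F : IntermediateField ℚ P.SplittingField) (z : P.SplittingField), z ∈ F → z ^ 2 ∈ F := by
    intro F z hz
    rw [sq]; exact F.mul_mem hz hz
  have decompM1 : ∀ x ∈ M1, ∃ c d : ℚ, x = algebraMap ℚ P.SplittingField c + algebraMap ℚ P.SplittingField d * s1 := by
    intro x hx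
    exact aux_quad_mem_bot D1q hs1alg hs1bot (by rw [hM1] at hx; exact hx)
  have htt : t * t ∈ M1 := by
    have : t * t = u := by rw [← sq]; exact hu
    rw [this]; exact huM1
  have decompM2 : ∀ x ∈ M2, ∃ c d : P.SplittingField, c ∈ M1 ∧ d ∈ M1 ∧ x = c + d * t := by
    intro x hx
    rw [hM2eq] at hx
    obtain ⟨c, hc, d, hd, rfl⟩ := aux_quad_mem htt htnotM1 hx
    exact ⟨c, d, hc, hd, rfl⟩
  have hD2Kalg : u * u' = algebraMap ℚ P.SplittingField D2q := by
    rw [hD2K, hD2qdef]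
    simp only [map_sub, map_add, map_mul, map_pow, map_ofNat, map_intCast]
  have hD2Kne : algebraMap ℚ P.SplittingField D2q ≠ 0 := fun h => hD2ne (inj (by rw [h, map_zero]))
  have hu'ne : u' ≠ 0 := by
    intro h
    apply hD2Kne
    rw [← hD2Kalg, h, mul_zero]
  -- the norm trick
  have normtrick : ∀ (v : P.SplittingField) (Ev Fv : ℚ), v = algebraMap ℚ P.SplittingField Ev + algebraMap ℚ P.SplittingField Fv * s1 →
      Ev ^ 2 - Fv ^ 2 * D1q = D2q →
      ∀ c d q : ℚ, (algebraMap ℚ P.SplittingField c + algebraMap ℚ P.SplittingField d * s1) ^ 2 * v = algebraMap ℚ P.SplittingField q →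
      c = 0 ∧ d = 0 := by
    intro v Ev Fv hv hEF c d q h
    have key : (algebraMap ℚ P.SplittingField c + algebraMap ℚ P.SplittingField d * s1) ^ 2 * v =
        algebraMap ℚ P.SplittingField ((c ^ 2 + d ^ 2 * D1q) * Ev + (2 * c * d) * Fv * D1q) +
        algebraMap ℚ P.SplittingField ((c ^ 2 + d ^ 2 * D1q) * Fv + (2 * c * d) * Ev) * s1 := by
      simp only [map_add, map_mul, map_pow, map_ofNat]
      rw [hv]
      linear_combination (2 * algebraMap ℚ P.SplittingField c * algebraMap ℚ P.SplittingField d * algebraMap ℚ P.SplittingField Fv +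
        (algebraMap ℚ P.SplittingField d) ^ 2 * (algebraMap ℚ P.SplittingField Ev + algebraMap ℚ P.SplittingField Fv * s1)) * hs1alg
    rw [h] at key
    have key2 : algebraMap ℚ P.SplittingField ((c ^ 2 + d ^ 2 * D1q) * Ev + (2 * c * d) * Fv * D1q) +
        algebraMap ℚ P.SplittingField ((c ^ 2 + d ^ 2 * D1q) * Fv + (2 * c * d) * Ev) * s1 =
        algebraMap ℚ P.SplittingField q + algebraMap ℚ P.SplittingField 0 * s1 := by
      rw [← key, map_zero]; ring
    obtain ⟨k1, k2⟩ := aux_coords_bot hs1bot key2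
    have hnorm := aux_norm D1q ((c ^ 2 + d ^ 2 * D1q)) (2 * c * d) Ev Fv q k2 k1
    rw [hEF] at hnorm
    have hnorm2 : q ^ 2 = (c ^ 2 - d ^ 2 * D1q) ^ 2 * D2q := by rw [hnorm]; ring
    by_cases hcd : c ^ 2 - d ^ 2 * D1q = 0
    · by_cases hd0 : d = 0
      · refine ⟨?_, hd0⟩
        have hc2 : c ^ 2 = 0 := by
          rw [hd0] at hcd
          linear_combination hcd
        exact (pow_eq_zero_iff two_ne_zero).mp hc2
      · exfalso
        apply hq1 (c / d)
        rw [div_pow, eq_div_iff (pow_ne_zero 2 hd0)]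
        linear_combination -hcd
    · exfalso
      apply hq2 (q / (c ^ 2 - d ^ 2 * D1q))
      rw [div_pow, eq_div_iff (pow_ne_zero 2 hcd)]
      linear_combination -hnorm2
  -- t' is not in M2 (degree 8!)
  have ht'M2 : t' ∉ M2 := by
    intro hmem
    obtain ⟨γ, δ, hγ, hδ, heq⟩ := decompM2 t' hmem
    have hexp : (γ ^ 2 + δ ^ 2 * u) + (2 * γ * δ) * t = u' + 0 * t := by
      linear_combination hu' - δ ^ 2 * hu - (γ + δ * t + t') * heq
    obtain ⟨h1, h2⟩ := aux_coords (F := M1) htnotM1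
      (M1.add_mem (pow2mem M1 _ hγ) (M1.mul_mem (pow2mem M1 _ hδ) huM1))
      (M1.mul_mem (M1.mul_mem (M1.mul_mem h2M1 hγ) hδ) (M1.one_mem))
      hu'M1 M1.zero_mem (by linear_combination hexp)
    have hγδ : γ = 0 ∨ δ = 0 := by
      have h2' : (2 : P.SplittingField) * γ * δ = 0 := by linear_combination h2
      rcases mul_eq_zero.mp h2' with h | h
      · rcases mul_eq_zero.mp h with h' | h'
        · exact absurd h' two_ne_zero
        · exact Or.inl h'
      · exact Or.inr h
    rcases hγδ with hγ0 | hδ0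
    · -- t' = δ t
      rw [hγ0] at h1
      have hself : δ ^ 2 * u = u' := by linear_combination h1
      have hsq : (δ * u) ^ 2 = algebraMap ℚ P.SplittingField D2q := by
        rw [← hD2Kalg]
        linear_combination u * hself
      obtain ⟨c, d, hcd⟩ := decompM1 (δ * u) (M1.mul_mem hδ huM1)
      rw [hcd] at hsq
      rcases aux_sq_dec hs1alg hs1bot hsq with ⟨_, hqq⟩ | ⟨_, hqq⟩
      · exact hq2 c hqq
      · exact hq12 (d * D1q) (by rw [hqq]; ring)
    · -- t' = γ ∈ M1
      rw [hδ0] at h1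
      have hself : γ ^ 2 = u' := by linear_combination h1
      have hγu : γ ^ 2 * u = algebraMap ℚ P.SplittingField D2q := by
        rw [← hD2Kalg]
        linear_combination u * hself
      obtain ⟨c, d, hcd⟩ := decompM1 γ hγ
      rw [hcd] at hγu
      obtain ⟨hc0, hd0⟩ := normtrick u E0 F0 huE hEFnorm c d D2q hγu
      rw [hc0, hd0] at hcd
      simp only [map_zero, zero_mul, zero_add, add_zero] at hcd
      apply hu'ne
      rw [← hself, hcd]
      ring
  -- classification of roots
  have hrootclass : ∀ x ∈ P.rootSet P.SplittingField, x = r ∨ x = r⁻¹ ∨ x = r' ∨ x = r'⁻¹ := by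
    intro x hx
    have hx0 := root_eq x hx
    have e1 : (x - r) * (x - r⁻¹) = x ^ 2 - y * x + 1 := by
      rw [hydef]; field_simp; ring
    have e2 : (x - r') * (x - r'⁻¹) = x ^ 2 - y' * x + 1 := by
      rw [hy'def]; field_simp; ring
    have hfac : ((x - r) * (x - r⁻¹)) * ((x - r') * (x - r'⁻¹)) = 0 := by
      rw [e1, e2]
      linear_combination hx0 - (x ^ 3 + x) * hsum + x ^ 2 * hprod
    rcases mul_eq_zero.mp hfac with h | h <;> rcases mul_eq_zero.mp h with h' | h'
    · exact Or.inl (sub_eq_zero.mp h')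
    · exact Or.inr (Or.inl (sub_eq_zero.mp h'))
    · exact Or.inr (Or.inr (Or.inl (sub_eq_zero.mp h')))
    · exact Or.inr (Or.inr (Or.inr (sub_eq_zero.mp h')))
  have htop : adjoin ℚ (P.rootSet P.SplittingField) = ⊤ := by
    apply IntermediateField.adjoin_eq_top_of_algebra
    exact SplittingField.adjoin_rootSet P
  have hr'eq : r' = (t' + y') / 2 := by rw [ht'def, hy'def]; ring
  have hM3 : (⊤ : IntermediateField ℚ P.SplittingField) = adjoin ℚ (↑M2 ∪ {t'} : Set P.SplittingField) := by
    apply le_antisymm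
    · rw [← htop, adjoin_le_iff]
      intro x hx
      have ht'mem : t' ∈ adjoin ℚ (↑M2 ∪ {t'} : Set P.SplittingField) := subset_adjoin _ _ (Or.inr rfl)
      have hM2sub : ∀ z ∈ M2, z ∈ adjoin ℚ (↑M2 ∪ {t'} : Set P.SplittingField) :=
        fun z hz => subset_adjoin _ _ (Or.inl hz)
      have hr'mem2 : r' ∈ adjoin ℚ (↑M2 ∪ {t'} : Set P.SplittingField) := by
        rw [hr'eq]
        refine div_mem (add_mem ht'mem (hM2sub y' (hM1leM2 hy'M1))) ?_
        exact_mod_cast IntermediateField.natCast_mem _ 2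
      rcases hrootclass x hx with h | h | h | h
      · rw [h]; exact hM2sub r hrM2
      · rw [h]; exact inv_mem (hM2sub r hrM2)
      · rw [h]; exact hr'mem2
      · rw [h]; exact inv_mem hr'mem2
    · exact le_top
  have ht't' : t' * t' ∈ M2 := by
    have : t' * t' = u' := by rw [← sq]; exact hu'
    rw [this]; exact hM1leM2 hu'M1
  have decompK : ∀ w : P.SplittingField, ∃ α β : P.SplittingField, α ∈ M2 ∧ β ∈ M2 ∧ w = α + β * t' := by
    intro w
    have hw : w ∈ adjoin ℚ (↑M2 ∪ {t'} : Set P.SplittingField) := by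
      rw [← hM3]; exact IntermediateField.mem_top
    obtain ⟨α, hα, β, hβ, rfl⟩ := aux_quad_mem ht't' ht'M2 hw
    exact ⟨α, β, hα, hβ, rfl⟩
  -- degree 8
  have hr'M2 : r' ∉ M2 := by
    intro h
    apply ht'M2
    rw [ht'def]
    exact M2.sub_mem h (M2.inv_mem h)
  have hadjrr' : adjoin ℚ ({r} ∪ {r'} : Set P.SplittingField) = ⊤ := by
    apply le_antisymm le_top
    rw [← htop, adjoin_le_iff]
    intro x hx
    have hrm : r ∈ adjoin ℚ ({r} ∪ {r'} : Set P.SplittingField) := subset_adjoin _ _ (Or.inl rfl)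
    have hr'm : r' ∈ adjoin ℚ ({r} ∪ {r'} : Set P.SplittingField) := subset_adjoin _ _ (Or.inr rfl)
    rcases hrootclass x hx with h | h | h | h
    · rw [h]; exact hrm
    · rw [h]; exact inv_mem hrm
    · rw [h]; exact hr'm
    · rw [h]; exact inv_mem hr'm
  have htop2 : adjoin M2 ({r'} : Set P.SplittingField) = ⊤ := by
    apply IntermediateField.restrictScalars_injective ℚ
    rw [hM2]
    erw [adjoin_adjoin_left]
    rw [restrictScalars_top]
    exact hadjrr'
  have hy'M2 : y' ∈ M2 := hM1leM2 hy'M1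
  have hfrM2K : Module.finrank M2 P.SplittingField = 2 := by
    have hint : IsIntegral M2 r' := IsIntegral.of_finite _ _
    have h1 := IntermediateField.adjoin.finrank hint
    rw [htop2, IntermediateField.finrank_top'] at h1
    have hg0 : aeval r' (X ^ 2 - C (⟨y', hy'M2⟩ : M2) * X + 1 : Polynomial M2) = 0 := by
      simp only [map_add, map_sub, map_mul, map_pow, map_one, aeval_X, aeval_C]
      have hcoe : (algebraMap M2 P.SplittingField) (⟨y', hy'M2⟩ : M2) = y' := rfl
      rw [hcoe, hy'def]
      field_simp
      ring
    have hgmonic : (X ^ 2 - C (⟨y', hy'M2⟩ : M2) * X + 1 : Polynomial M2).Monic := by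
      monicity!
    have hdvd := minpoly.dvd M2 r' hg0
    have hgd : (X ^ 2 - C (⟨y', hy'M2⟩ : M2) * X + 1 : Polynomial M2).natDegree = 2 := by
      compute_degree!
    have hle2 : (minpoly M2 r').natDegree ≤ 2 := by
      have := natDegree_le_of_dvd hdvd hgmonic.ne_zero
      omega
    have hge2 : 2 ≤ (minpoly M2 r').natDegree := by
      apply (minpoly.two_le_natDegree_iff hint).mpr
      rintro ⟨z, hz⟩
      apply hr'M2
      rw [← hz]
      exact z.2
    omega
  have hfinrank8 : Module.finrank ℚ P.SplittingField = 8 := by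
    have hmul := Module.finrank_mul_finrank ℚ M2 P.SplittingField
    rw [hfrM2, hfrM2K] at hmul
    omega
  -- the master lemma
  have master : ∀ w : P.SplittingField, ∀ qv : ℚ, w ^ 2 = algebraMap ℚ P.SplittingField qv →
      (∃ cv : ℚ, w = algebraMap ℚ P.SplittingField cv) ∨ (∃ dv : ℚ, w = algebraMap ℚ P.SplittingField dv * s1) ∨
      (∃ dv : ℚ, w = algebraMap ℚ P.SplittingField dv * s2) ∨ (∃ dv : ℚ, w = algebraMap ℚ P.SplittingField dv * s3) := by
    intro w qv hw
    obtain ⟨α, β, hα, hβ, rfl⟩ := decompK w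
    have hexp : (α ^ 2 + β ^ 2 * u') + (2 * α * β) * t' = algebraMap ℚ P.SplittingField qv + 0 * t' := by
      linear_combination hw - β ^ 2 * hu'
    obtain ⟨h1, h2⟩ := aux_coords (F := M2) ht'M2
      (M2.add_mem (pow2mem M2 _ hα) (M2.mul_mem (pow2mem M2 _ hβ) (hM1leM2 hu'M1)))
      (M2.mul_mem (M2.mul_mem h2M2 hα) hβ)
      (M2.algebraMap_mem qv) M2.zero_mem hexp
    have hαβ : α = 0 ∨ β = 0 := by
      have h2' : (2 : P.SplittingField) * α * β = 0 := by linear_combination h2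
      rcases mul_eq_zero.mp h2' with h | h
      · rcases mul_eq_zero.mp h with h' | h'
        · exact absurd h' two_ne_zero
        · exact Or.inl h'
      · exact Or.inr h
    rcases hαβ with hα0 | hβ0
    · -- w = β t'
      rw [hα0] at h1
      have h1' : β ^ 2 * u' = algebraMap ℚ P.SplittingField qv := by linear_combination h1
      obtain ⟨γ, δ, hγ, hδ, heq⟩ := decompM2 β hβ
      have hexp2 : ((γ ^ 2 + δ ^ 2 * u) * u') + (2 * γ * δ * u') * t =
          algebraMap ℚ P.SplittingField qv + 0 * t := by
        linear_combination h1' - (u' * δ ^ 2) * hu - ((γ + δ * t + β) * u') * heq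
      obtain ⟨g1, g2⟩ := aux_coords (F := M1) htnotM1
        (M1.mul_mem (M1.add_mem (pow2mem M1 _ hγ) (M1.mul_mem (pow2mem M1 _ hδ) huM1)) hu'M1)
        (M1.mul_mem (M1.mul_mem (M1.mul_mem h2M1 hγ) hδ) hu'M1)
        (M1.algebraMap_mem qv) M1.zero_mem hexp2
      have hγδ : γ = 0 ∨ δ = 0 := by
        have g2' : ((2 : P.SplittingField) * γ * δ) * u' = 0 := by linear_combination g2
        rcases mul_eq_zero.mp g2' with h | h
        · rcases mul_eq_zero.mp h with h' | h'
          · rcases mul_eq_zero.mp h' with h'' | h''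
            · exact absurd h'' two_ne_zero
            · exact Or.inl h''
          · exact Or.inr h'
        · exact absurd h hu'ne
      rcases hγδ with hγ0 | hδ0
      · -- β = δ t, w = δ s2
        rw [hγ0] at heq
        have hβeq : β = δ * t := by rw [heq]; ring
        have h3 : δ ^ 2 * algebraMap ℚ P.SplittingField D2q = algebraMap ℚ P.SplittingField qv := by
          rw [← hD2Kalg]
          linear_combination h1' - δ ^ 2 * u' * hu - ((δ * t + β) * u') * hβeq
        obtain ⟨c, d, hcd⟩ := decompM1 δ hδ
        rw [hcd] at h3
        have key : algebraMap ℚ P.SplittingField ((c ^ 2 + d ^ 2 * D1q) * D2q) +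
            algebraMap ℚ P.SplittingField (2 * c * d * D2q) * s1 =
            algebraMap ℚ P.SplittingField qv + algebraMap ℚ P.SplittingField 0 * s1 := by
          simp only [map_add, map_mul, map_pow, map_ofNat, map_zero]
          rw [← h3]
          linear_combination (-(algebraMap ℚ P.SplittingField d) ^ 2 *
            algebraMap ℚ P.SplittingField D2q) * hs1alg
        obtain ⟨k1, k2⟩ := aux_coords_bot hs1bot key
        have hcd0 : c = 0 ∨ d = 0 := by
          have h4 : (2 * c * d) * D2q = 0 := by linear_combination k2
          rcases mul_eq_zero.mp h4 with h5 | h5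
          · rcases mul_eq_zero.mp h5 with h6 | h6
            · rcases mul_eq_zero.mp h6 with h7 | h7
              · exact absurd h7 two_ne_zero
              · exact Or.inl h7
            · exact Or.inr h6
          · exact absurd h5 hD2ne
        rcases hcd0 with hc0 | hd0
        · refine Or.inr (Or.inr (Or.inr ⟨d, ?_⟩))
          rw [hα0, hs3def, hs2def, hβeq, hcd, hc0, map_zero]
          ring
        · refine Or.inr (Or.inr (Or.inl ⟨c, ?_⟩))
          rw [hα0, hs2def, hβeq, hcd, hd0, map_zero]
          ring
      · -- β = γ ∈ M1
        rw [hδ0] at heq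
        have hβeq : β = γ := by rw [heq]; ring
        obtain ⟨c, d, hcd⟩ := decompM1 γ hγ
        have hEF' : E0 ^ 2 - (-F0) ^ 2 * D1q = D2q := by
          rw [← hEFnorm]; ring
        have hu'E : u' = algebraMap ℚ P.SplittingField E0 + algebraMap ℚ P.SplittingField (-F0) * s1 := by
          rw [map_neg]
          linear_combination huE'
        have hfinal : (algebraMap ℚ P.SplittingField c + algebraMap ℚ P.SplittingField d * s1) ^ 2 * u' =
            algebraMap ℚ P.SplittingField qv := by
          rw [← hcd, ← hβeq]
          linear_combination h1'
        obtain ⟨hc0, hd0⟩ := normtrick u' E0 (-F0) hu'E hEF' c d qv hfinal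
        refine Or.inl ⟨0, ?_⟩
        rw [map_zero, hα0, hβeq, hcd, hc0, hd0]
        simp
    · -- w = α ∈ M2
      rw [hβ0] at h1
      have h1' : α ^ 2 = algebraMap ℚ P.SplittingField qv := by linear_combination h1
      obtain ⟨γ, δ, hγ, hδ, heq⟩ := decompM2 α hα
      have hexp2 : (γ ^ 2 + δ ^ 2 * u) + (2 * γ * δ) * t = algebraMap ℚ P.SplittingField qv + 0 * t := by
        linear_combination h1' - δ ^ 2 * hu - (γ + δ * t + α) * heq
      obtain ⟨g1, g2⟩ := aux_coords (F := M1) htnotM1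
        (M1.add_mem (pow2mem M1 _ hγ) (M1.mul_mem (pow2mem M1 _ hδ) huM1))
        (M1.mul_mem (M1.mul_mem h2M1 hγ) hδ)
        (M1.algebraMap_mem qv) M1.zero_mem hexp2
      have hγδ : γ = 0 ∨ δ = 0 := by
        have g2' : (2 : P.SplittingField) * γ * δ = 0 := by linear_combination g2
        rcases mul_eq_zero.mp g2' with h | h
        · rcases mul_eq_zero.mp h with h' | h'
          · exact absurd h' two_ne_zero
          · exact Or.inl h'
        · exact Or.inr h
      rcases hγδ with hγ0 | hδ0
      · -- α = δ t
        rw [hγ0] at heq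
        have hαeq : α = δ * t := by rw [heq]; ring
        obtain ⟨c, d, hcd⟩ := decompM1 δ hδ
        have hfinal : (algebraMap ℚ P.SplittingField c + algebraMap ℚ P.SplittingField d * s1) ^ 2 * u =
            algebraMap ℚ P.SplittingField qv := by
          rw [← hcd]
          linear_combination h1' - δ ^ 2 * hu - (δ * t + α) * hαeq
        obtain ⟨hc0, hd0⟩ := normtrick u E0 F0 huE hEFnorm c d qv hfinal
        refine Or.inl ⟨0, ?_⟩
        rw [map_zero, hβ0, hαeq, hcd, hc0, hd0]
        simp
      · -- α = γ ∈ M1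
        rw [hδ0] at heq
        have hαeq : α = γ := by rw [heq]; ring
        obtain ⟨c, d, hcd⟩ := decompM1 γ hγ
        have hsq : (algebraMap ℚ P.SplittingField c + algebraMap ℚ P.SplittingField d * s1) ^ 2 = algebraMap ℚ P.SplittingField qv := by
          rw [← hcd, ← hαeq]
          exact h1'
        rcases aux_sq_dec hs1alg hs1bot hsq with ⟨hd0, _⟩ | ⟨hc0, _⟩
        · refine Or.inl ⟨c, ?_⟩
          rw [hβ0, hαeq, hcd, hd0, map_zero]
          ring
        · refine Or.inr (Or.inl ⟨d, ?_⟩)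
          rw [hβ0, hαeq, hcd, hc0, map_zero]
          ring
  -- quadratic subfields
  set Q2 : IntermediateField ℚ P.SplittingField := adjoin ℚ {s2} with hQ2
  set Q3 : IntermediateField ℚ P.SplittingField := adjoin ℚ {s3} with hQ3
  have hfrQ2 : Module.finrank ℚ Q2 = 2 := by
    rw [hQ2]; exact aux_finrank_adjoin_sq D2q hs2alg hs2bot
  have hfrQ3 : Module.finrank ℚ Q3 = 2 := by
    rw [hQ3]; exact aux_finrank_adjoin_sq (D1q * D2q) hs3alg hs3bot
  have hne12 : M1 ≠ Q2 := by
    intro h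
    have hs2M1 : s2 ∈ M1 := by
      rw [h, hQ2]; exact mem_adjoin_simple_self ℚ s2
    obtain ⟨c, d, hcd⟩ := decompM1 s2 hs2M1
    have hsq : (algebraMap ℚ P.SplittingField c + algebraMap ℚ P.SplittingField d * s1) ^ 2 = algebraMap ℚ P.SplittingField D2q := by
      rw [← hcd]; exact hs2alg
    rcases aux_sq_dec hs1alg hs1bot hsq with ⟨_, h'⟩ | ⟨_, h'⟩
    · exact hq2 c h'
    · exact hq12 (d * D1q) (by rw [h']; ring)
  have hne13 : M1 ≠ Q3 := by
    intro h
    have hs3M1 : s3 ∈ M1 := by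
      rw [h, hQ3]; exact mem_adjoin_simple_self ℚ s3
    obtain ⟨c, d, hcd⟩ := decompM1 s3 hs3M1
    have hsq : (algebraMap ℚ P.SplittingField c + algebraMap ℚ P.SplittingField d * s1) ^ 2 = algebraMap ℚ P.SplittingField (D1q * D2q) := by
      rw [← hcd]; exact hs3alg
    rcases aux_sq_dec hs1alg hs1bot hsq with ⟨_, h'⟩ | ⟨_, h'⟩
    · exact hq12 c h'
    · apply hq2 d
      have := mul_left_cancel₀ hD1ne (show D1q * D2q = D1q * d ^ 2 by linear_combination h')
      exact this
  have hne23 : Q2 ≠ Q3 := by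
    intro h
    have hs3Q2 : s3 ∈ Q2 := by
      rw [h, hQ3]; exact mem_adjoin_simple_self ℚ s3
    obtain ⟨c, d, hcd⟩ := aux_quad_mem_bot D2q hs2alg hs2bot (by rw [hQ2] at hs3Q2; exact hs3Q2)
    have hsq : (algebraMap ℚ P.SplittingField c + algebraMap ℚ P.SplittingField d * s2) ^ 2 = algebraMap ℚ P.SplittingField (D1q * D2q) := by
      rw [← hcd]; exact hs3alg
    rcases aux_sq_dec hs2alg hs2bot hsq with ⟨_, h'⟩ | ⟨_, h'⟩
    · exact hq12 c h'
    · apply hq1 d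
      have := mul_right_cancel₀ hD2ne (show D1q * D2q = d ^ 2 * D2q by linear_combination h')
      exact this
  have hsetEq : {L : IntermediateField ℚ P.SplittingField | Module.finrank ℚ L = 2} = {M1, Q2, Q3} := by
    ext L
    simp only [Set.mem_setOf_eq, Set.mem_insert_iff, Set.mem_singleton_iff]
    constructor
    · intro hL
      have hLnbot : ¬(L ≤ ⊥) := by
        intro hle
        have hLb : L = ⊥ := le_bot_iff.mp hle
        rw [hLb, IntermediateField.finrank_bot] at hL
        omega
      obtain ⟨x, hxL, hxbot⟩ := SetLike.not_le_iff_exists.mp hLnbot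
      have hxint : IsIntegral ℚ x := IsIntegral.of_finite ℚ x
      have hadj_le : adjoin ℚ ({x} : Set P.SplittingField) ≤ L := adjoin_simple_le_iff.mpr hxL
      have hfr_x : Module.finrank ℚ (adjoin ℚ ({x} : Set P.SplittingField)) = 2 := by
        have hle2 : Module.finrank ℚ (adjoin ℚ ({x} : Set P.SplittingField)) ≤ 2 := by
          rw [← hL]
          have hsubm : Subalgebra.toSubmodule (adjoin ℚ ({x} : Set P.SplittingField)).toSubalgebra ≤
              Subalgebra.toSubmodule L.toSubalgebra := fun z hz => hadj_le hz
          exact Submodule.finrank_mono hsubm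
        have hge2 : 2 ≤ Module.finrank ℚ (adjoin ℚ ({x} : Set P.SplittingField)) := by
          rw [IntermediateField.adjoin.finrank hxint]
          exact (minpoly.two_le_natDegree_iff hxint).mpr
            (fun ⟨z, hz⟩ => hxbot (IntermediateField.mem_bot.mpr ⟨z, hz⟩))
        omega
      have hLeq : adjoin ℚ ({x} : Set P.SplittingField) = L :=
        IntermediateField.eq_of_le_of_finrank_eq hadj_le (by rw [hfr_x, hL])
      have hdeg2 : (minpoly ℚ x).natDegree = 2 := by
        have h0 := IntermediateField.adjoin.finrank hxint
        rw [hfr_x] at h0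
        exact h0.symm
      have hmeq : minpoly ℚ x =
          X ^ 2 + C ((minpoly ℚ x).coeff 1) * X + C ((minpoly ℚ x).coeff 0) :=
        aux_monic2 _ (minpoly.monic hxint) hdeg2
      have hxeq : x ^ 2 + algebraMap ℚ P.SplittingField ((minpoly ℚ x).coeff 1) * x +
          algebraMap ℚ P.SplittingField ((minpoly ℚ x).coeff 0) = 0 := by
        have h0 := minpoly.aeval ℚ x
        rw [hmeq] at h0
        simpa [map_add, map_mul, map_pow, aeval_X, aeval_C] using h0
      set pp : ℚ := (minpoly ℚ x).coeff 1 with hppdef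
      set qq : ℚ := (minpoly ℚ x).coeff 0 with hqqdef
      set w : P.SplittingField := x + algebraMap ℚ P.SplittingField (pp / 2) with hwdef
      have hwsq : w ^ 2 = algebraMap ℚ P.SplittingField (pp ^ 2 / 4 - qq) := by
        rw [hwdef]
        have hc1 : algebraMap ℚ P.SplittingField (pp / 2) = algebraMap ℚ P.SplittingField pp / 2 := by
          rw [map_div₀, map_ofNat]
        have hc2 : algebraMap ℚ P.SplittingField (pp ^ 2 / 4 - qq) =
            (algebraMap ℚ P.SplittingField pp) ^ 2 / 4 - algebraMap ℚ P.SplittingField qq := by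
          rw [map_sub, map_div₀, map_pow, map_ofNat]
        rw [hc1, hc2]
        field_simp
        linear_combination 16 * hxeq
      have hwbot : w ∉ (⊥ : IntermediateField ℚ P.SplittingField) := by
        intro hwb
        apply hxbot
        have hx' : x = w - algebraMap ℚ P.SplittingField (pp / 2) := by rw [hwdef]; ring
        rw [hx']
        exact sub_mem hwb (IntermediateField.algebraMap_mem _ _)
      have finish : ∀ (s : P.SplittingField) (dv : ℚ), w = algebraMap ℚ P.SplittingField dv * s →
          adjoin ℚ ({x} : Set P.SplittingField) = adjoin ℚ ({s} : Set P.SplittingField) := by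
        intro s dv hw'
        have hdv0 : dv ≠ 0 := by
          rintro rfl
          apply hwbot
          rw [hw', map_zero, zero_mul]
          exact zero_mem _
        apply le_antisymm
        · rw [adjoin_simple_le_iff]
          have hx' : x = algebraMap ℚ P.SplittingField dv * s - algebraMap ℚ P.SplittingField (pp / 2) := by
            rw [← hw', hwdef]; ring
          rw [hx']
          exact sub_mem (mul_mem (IntermediateField.algebraMap_mem _ _)
            (mem_adjoin_simple_self ℚ s)) (IntermediateField.algebraMap_mem _ _)
        · rw [adjoin_simple_le_iff]
          have hs' : s = algebraMap ℚ P.SplittingField dv⁻¹ * (x + algebraMap ℚ P.SplittingField (pp / 2)) := by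
            rw [← hwdef, hw', ← mul_assoc, ← map_mul, inv_mul_cancel₀ hdv0, map_one, one_mul]
          rw [hs']
          exact mul_mem (IntermediateField.algebraMap_mem _ _)
            (add_mem (mem_adjoin_simple_self ℚ x) (IntermediateField.algebraMap_mem _ _))
      rcases master w _ hwsq with ⟨cv, hcv⟩ | ⟨dv, hdv⟩ | ⟨dv, hdv⟩ | ⟨dv, hdv⟩
      · exact absurd (IntermediateField.mem_bot.mpr ⟨cv, hcv.symm⟩) hwbot
      · left; rw [← hLeq, hM1]; exact finish s1 dv hdv
      · right; left; rw [← hLeq, hQ2]; exact finish s2 dv hdv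
      · right; right; rw [← hLeq, hQ3]; exact finish s3 dv hdv
    · intro h
      rcases h with rfl | rfl | rfl
      · exact hfrM1
      · exact hfrQ2
      · exact hfrQ3
  -- Galois theory
  haveI hgal : IsGalois ℚ P.SplittingField := by
    haveI : IsSplittingField ℚ P.SplittingField P := Polynomial.IsSplittingField.splittingField P
    exact IsGalois.of_separable_splitting_field hsep
  have hcardG : Nat.card (P.SplittingField ≃ₐ[ℚ] P.SplittingField) = 8 := by
    rw [IsGalois.card_aut_eq_finrank ℚ P.SplittingField, hfinrank8]
  have hiii : ∀ L : IntermediateField ℚ P.SplittingField, L ≠ ⊥ → M1 ≤ L ∨ Q2 ≤ L ∨ Q3 ≤ L := by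
    intro L hL
    have hfix : fixedField (fixingSubgroup L) = L := IsGalois.fixedField_fixingSubgroup L
    have hfixbot : fixingSubgroup (⊥ : IntermediateField ℚ P.SplittingField) = ⊤ := by
      rw [eq_top_iff]
      intro g _
      rw [IntermediateField.mem_fixingSubgroup_iff]
      intro z hz
      obtain ⟨c, rfl⟩ := IntermediateField.mem_bot.mp hz
      exact g.commutes c
    have hHne : fixingSubgroup L ≠ ⊤ := by
      intro h
      apply hL
      rw [← hfix, h, ← hfixbot, IsGalois.fixedField_fixingSubgroup]
    have hdvd8 : Nat.card (fixingSubgroup L) ∣ 2 ^ 3 := by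
      rw [show (2:ℕ)^3 = 8 by norm_num, ← hcardG]
      exact Subgroup.card_subgroup_dvd_card _
    have hne8 : Nat.card (fixingSubgroup L) ≠ 8 := by
      intro h
      exact hHne (Subgroup.eq_top_of_card_eq _ (by rw [h, hcardG]))
    obtain ⟨k, hk3, hkeq⟩ := (Nat.dvd_prime_pow Nat.prime_two).mp hdvd8
    have hk2 : k ≤ 2 := by
      by_contra hgt
      have hk3' : k = 3 := by omega
      rw [hk3'] at hkeq
      exact hne8 (by rw [hkeq]; norm_num)
    have hstep : ∀ (H : Subgroup (P.SplittingField ≃ₐ[ℚ] P.SplittingField)) (n : ℕ), n + 1 ≤ 3 → Nat.card H = 2 ^ n →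
        ∃ H' : Subgroup (P.SplittingField ≃ₐ[ℚ] P.SplittingField), Nat.card H' = 2 ^ (n + 1) ∧ H ≤ H' := by
      intro H n hn hcard
      apply Sylow.exists_subgroup_card_pow_succ ?_ hcard
      rw [hcardG, show (8:ℕ) = 2 ^ 3 from rfl]
      exact pow_dvd_pow 2 hn
    have hH4 : ∃ H4 : Subgroup (P.SplittingField ≃ₐ[ℚ] P.SplittingField), Nat.card H4 = 4 ∧ fixingSubgroup L ≤ H4 := by
      interval_cases k
      · obtain ⟨H2, h2c, hle2⟩ := hstep _ 0 (by norm_num) hkeq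
        obtain ⟨H4, h4c, hle4⟩ := hstep H2 1 (by norm_num) h2c
        exact ⟨H4, by rw [h4c]; norm_num, le_trans hle2 hle4⟩
      · obtain ⟨H4, h4c, hle4⟩ := hstep _ 1 (by norm_num) hkeq
        exact ⟨H4, by rw [h4c]; norm_num, hle4⟩
      · exact ⟨_, by rw [hkeq]; norm_num, le_rfl⟩
    obtain ⟨H4, hH4card, hle4⟩ := hH4
    have hL2le : fixedField H4 ≤ L := by
      rw [← hfix, IntermediateField.le_iff_le, IntermediateField.fixingSubgroup_fixedField H4]
      exact hle4
    have hfr2 : Module.finrank ℚ (fixedField H4) = 2 := by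
      have hc1 : Module.finrank (fixedField H4) P.SplittingField = 4 := by
        rw [IntermediateField.finrank_fixedField_eq_card]
        exact hH4card
      have h2 := Module.finrank_mul_finrank ℚ (fixedField H4) P.SplittingField
      rw [hc1, hfinrank8] at h2
      omega
    have hmem : fixedField H4 ∈ {L' : IntermediateField ℚ P.SplittingField | Module.finrank ℚ L' = 2} := hfr2
    rw [hsetEq] at hmem
    rcases hmem with h | h | h
    · left; rw [← h]; exact hL2le
    · right; left; rw [← h]; exact hL2le
    · right; right; rw [← h]; exact hL2le
  -- dihedral group
  haveI hsplitfact : Fact ((P.map (algebraMap ℚ P.SplittingField)).Splits) := ⟨hsplits⟩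
  have hGalcard : Fintype.card P.Gal = 8 := by
    rw [← Nat.card_eq_fintype_card, Polynomial.Gal.card_of_separable hsep]
    exact hfinrank8
  have hcardzmod : Fintype.card (P.rootSet P.SplittingField) = Fintype.card (ZMod 4) := by
    rw [hcard4, ZMod.card]
  let e4 : P.rootSet P.SplittingField ≃ ZMod 4 := Fintype.equivOfCardEq hcardzmod
  let ψ : P.Gal →* Equiv.Perm (ZMod 4) :=
    ((permCongrMul e4).toMonoidHom).comp (Polynomial.Gal.galActionHom P P.SplittingField)
  have hψinj : Function.Injective ψ := by
    intro x1 x2 hxy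
    apply Polynomial.Gal.galActionHom_injective P P.SplittingField
    apply (permCongrMul e4).injective
    exact hxy
  have hcardPerm : Nat.card (Equiv.Perm (ZMod 4)) = 24 := by
    rw [Nat.card_eq_fintype_card, Fintype.card_perm, ZMod.card]
    decide
  have hfact : (Nat.card (Equiv.Perm (ZMod 4))).factorization 2 = 3 := by
    rw [hcardPerm, show (24:ℕ) = 2 ^ 3 * 3 by norm_num,
      Nat.factorization_mul (by norm_num) (by norm_num)]
    rw [Nat.Prime.factorization_pow Nat.prime_two]
    simp [Nat.factorization_eq_zero_of_not_dvd]
  have hcardψr : Nat.card ψ.range = 8 := by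
    have h0 : Nat.card P.Gal = 8 := by rw [Nat.card_eq_fintype_card, hGalcard]
    rw [← h0]
    exact (Nat.card_congr (MonoidHom.ofInjective hψinj).toEquiv).symm
  have hcardφr : Nat.card (dihedralToPerm).range = 8 := by
    have h0 : Nat.card (DihedralGroup 4) = 8 := by rw [DihedralGroup.nat_card]
    rw [← h0]
    exact (Nat.card_congr (MonoidHom.ofInjective dihedralToPerm_injective).toEquiv).symm
  let S1 : Sylow 2 (Equiv.Perm (ZMod 4)) := Sylow.ofCard ψ.range (by rw [hcardψr, hfact]; norm_num)
  let S2' : Sylow 2 (Equiv.Perm (ZMod 4)) :=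
    Sylow.ofCard (dihedralToPerm).range (by rw [hcardφr, hfact]; norm_num)
  obtain ⟨g, hg⟩ := MulAction.exists_smul_eq (Equiv.Perm (ZMod 4)) S1 S2'
  have hiso : Nonempty (P.Gal ≃* DihedralGroup 4) := by
    refine ⟨((MonoidHom.ofInjective hψinj).trans
      (((S1.equivSMul g).trans
        (MulEquiv.subgroupCongr (congrArg Sylow.toSubgroup hg))).trans
        (MonoidHom.ofInjective dihedralToPerm_injective).symm))⟩
  -- assembly
  refine ⟨hfinrank8, hiso, s1, s2, s3, ?_, ?_, ?_, ?_, ?_, ?_, ?_, ?_⟩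
  · rw [hs1sq]; push_cast; ring
  · rw [hs2sq]; push_cast; ring
  · rw [hs3sq]; push_cast; ring
  · rw [← hM1, ← hQ2]; exact hne12
  · rw [← hM1, ← hQ3]; exact hne13
  · rw [← hQ2, ← hQ3]; exact hne23
  · rw [← hM1, ← hQ2, ← hQ3]; exact hsetEq
  · intro L hl
    rw [← hM1, ← hQ2, ← hQ3]
    exact hiii L hl
end

section
/- Call a matrix M = (a b; c d) ∈ SL(2,ℤ) t-reduced if 0 < a, a ≤ b, a ≤ c, b < d and c < d. Then: (i) the product of two t-reduced matrices is t-reduced; (ii) if M₀ and M₁ are t-reduced with bottom-right entries q₀ and q₁ respectively, then the bottom-right entry q of M₀M₁ satisfies q₀q₁ ≤ q ≤ 2q₀q₁; (iii) if M = (p′ p; q′ q) ∈ SL(2,ℤ) is t-reduced, then (p + p′)/(q + q′) − p/q = 1/(q(q + q′)), and 1/(2q²) ≤ 1/(q(q + q′)) ≤ 1/q². -/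
/-- A matrix `(a b; c d) ∈ SL(2, ℤ)` is *t-reduced* if `0 < a`, `a ≤ b`, `a ≤ c`, `b < d`
and `c < d`. -/
def TReduced (M : Matrix.SpecialLinearGroup (Fin 2) ℤ) : Prop :=
  0 < M 0 0 ∧ M 0 0 ≤ M 0 1 ∧ M 0 0 ≤ M 1 0 ∧ M 0 1 < M 1 1 ∧ M 1 0 < M 1 1

private lemma mul_entry (M₀ M₁ : Matrix.SpecialLinearGroup (Fin 2) ℤ) (i j : Fin 2) :
    (M₀ * M₁) i j = M₀ i 0 * M₁ 0 j + M₀ i 1 * M₁ 1 j := by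
  show ((M₀ * M₁ : Matrix.SpecialLinearGroup (Fin 2) ℤ) : Matrix (Fin 2) (Fin 2) ℤ) i j = _
  rw [Matrix.SpecialLinearGroup.coe_mul, Matrix.mul_apply, Fin.sum_univ_two]

/-- (i) The product of two t-reduced matrices is t-reduced; (ii) the
bottom-right entry `q` of the product satisfies `q₀q₁ ≤ q ≤ 2q₀q₁`; (iii) if
`M = (p′ p; q′ q)` is t-reduced then `(p+p′)/(q+q′) − p/q = 1/(q(q+q′))` and
`1/(2q²) ≤ 1/(q(q+q′)) ≤ 1/q²`. -/
theorem stmt_9 :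
    (∀ M₀ M₁ : Matrix.SpecialLinearGroup (Fin 2) ℤ,
      TReduced M₀ → TReduced M₁ → TReduced (M₀ * M₁)) ∧
    (∀ M₀ M₁ : Matrix.SpecialLinearGroup (Fin 2) ℤ, TReduced M₀ → TReduced M₁ →
      M₀ 1 1 * M₁ 1 1 ≤ (M₀ * M₁) 1 1 ∧ (M₀ * M₁) 1 1 ≤ 2 * (M₀ 1 1 * M₁ 1 1)) ∧
    (∀ M : Matrix.SpecialLinearGroup (Fin 2) ℤ, TReduced M →
      ((M 0 1 : ℚ) + (M 0 0 : ℚ)) / ((M 1 1 : ℚ) + (M 1 0 : ℚ)) - (M 0 1 : ℚ) / (M 1 1 : ℚ) =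
          1 / ((M 1 1 : ℚ) * ((M 1 1 : ℚ) + (M 1 0 : ℚ))) ∧
        1 / (2 * (M 1 1 : ℚ) ^ 2) ≤ 1 / ((M 1 1 : ℚ) * ((M 1 1 : ℚ) + (M 1 0 : ℚ))) ∧
        1 / ((M 1 1 : ℚ) * ((M 1 1 : ℚ) + (M 1 0 : ℚ))) ≤ 1 / (M 1 1 : ℚ) ^ 2) := by
  refine ⟨?_, ?_, ?_⟩
  · rintro M₀ M₁ ⟨h1, h2, h3, h4, h5⟩ ⟨g1, g2, g3, g4, g5⟩
    have hb : 0 < M₀ 0 1 := lt_of_lt_of_le h1 h2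
    have hc : 0 < M₀ 1 0 := lt_of_lt_of_le h1 h3
    have hd : 0 < M₀ 1 1 := lt_trans hb h4
    have gb : 0 < M₁ 0 1 := lt_of_lt_of_le g1 g2
    have gc : 0 < M₁ 1 0 := lt_of_lt_of_le g1 g3
    have gd : 0 < M₁ 1 1 := lt_trans gb g4
    refine ⟨?_, ?_, ?_, ?_, ?_⟩ <;> simp only [mul_entry]
    · positivity
    · nlinarith
    · nlinarith
    · nlinarith
    · nlinarith
  · rintro M₀ M₁ ⟨h1, h2, h3, h4, h5⟩ ⟨g1, g2, g3, g4, g5⟩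
    have hc : 0 < M₀ 1 0 := lt_of_lt_of_le h1 h3
    have gb : 0 < M₁ 0 1 := lt_of_lt_of_le g1 g2
    have gd : 0 < M₁ 1 1 := lt_trans gb g4
    constructor <;> simp only [mul_entry] <;> nlinarith
  · rintro M ⟨h1, h2, h3, h4, h5⟩
    have hdet : M 0 0 * M 1 1 - M 0 1 * M 1 0 = 1 := by
      have := M.2
      rwa [Matrix.det_fin_two] at this
    have hc : 0 < M 1 0 := lt_of_lt_of_le h1 h3
    have hd : 0 < M 1 1 := lt_trans hc h5
    have hcq : (0 : ℚ) < (M 1 0 : ℚ) := by exact_mod_cast hc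
    have hdq : (0 : ℚ) < (M 1 1 : ℚ) := by exact_mod_cast hd
    have h5q : (M 1 0 : ℚ) < (M 1 1 : ℚ) := by exact_mod_cast h5
    have hdetq : (M 0 0 : ℚ) * (M 1 1 : ℚ) - (M 0 1 : ℚ) * (M 1 0 : ℚ) = 1 := by
      exact_mod_cast hdet
    refine ⟨?_, ?_, ?_⟩
    · field_simp
      linear_combination hdetq
    · rw [div_le_div_iff₀ (by positivity) (by positivity)]
      nlinarith
    · rw [div_le_div_iff₀ (by positivity) (by positivity)]
      nlinarith
end

section
/- For all integers m, n ≥ 2, set k = (m−1)(n−1) and consider the matrices A = (1+k, 1−n; 1−m, 1) and B = (1+4k, 2(1−n); 2(1−m), 1). Then A and B belong to SL(2,ℤ), tr(A) = k + 2 and tr(B) = 4k + 2, the discriminants tr(A)² − 4 = k(k+4) and tr(B)² − 4 = 16k(k+1) are positive integers that are not perfect squares (so each of A and B has two distinct real irrational eigenvalues), and moreover (k+1)(k+4) is not a perfect square, so that √(k(k+4)) and √(k(k+1)) generate distinct real quadratic extensions of ℚ whose intersection is ℚ. -/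
open Polynomial IntermediateField

/-! ### Auxiliary integer (non-)square lemmas -/

lemma aux_ns1 {k : ℤ} (hk : 1 ≤ k) : ¬ ∃ j : ℤ, k * (k + 4) = j ^ 2 := by
  rintro ⟨j, hj⟩
  have hj' : k * (k + 4) = |j| ^ 2 := by rw [hj, sq_abs]
  have h0 : 0 ≤ |j| := abs_nonneg j
  rcases le_or_gt |j| (k + 1) with h | h
  · nlinarith
  · have h2 : k + 2 ≤ |j| := by omega
    nlinarith

lemma aux_ns2 {k : ℤ} (hk : 1 ≤ k) : ¬ ∃ j : ℤ, 16 * (k * (k + 1)) = j ^ 2 := by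
  rintro ⟨j, hj⟩
  have hj' : 16 * (k * (k + 1)) = |j| ^ 2 := by rw [hj, sq_abs]
  have h0 : 0 ≤ |j| := abs_nonneg j
  rcases le_or_gt |j| (4 * k) with h | h
  · nlinarith
  · rcases le_or_gt (4 * k + 2) |j| with h2 | h2
    · nlinarith
    · have : |j| = 4 * k + 1 := by omega
      rw [this] at hj'
      nlinarith

lemma aux_ns3 {k : ℤ} (hk : 1 ≤ k) : ¬ ∃ j : ℤ, (k + 1) * (k + 4) = j ^ 2 := by
  rintro ⟨j, hj⟩
  have hj' : (k + 1) * (k + 4) = |j| ^ 2 := by rw [hj, sq_abs]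
  have h0 : 0 ≤ |j| := abs_nonneg j
  rcases le_or_gt |j| (k + 2) with h | h
  · nlinarith
  · have h2 : k + 3 ≤ |j| := by omega
    nlinarith

lemma aux_ns4 {k : ℤ} (hk : 1 ≤ k) : ¬ ∃ j : ℤ, k * (k + 1) = j ^ 2 := by
  rintro ⟨j, hj⟩
  have hj' : k * (k + 1) = |j| ^ 2 := by rw [hj, sq_abs]
  have h0 : 0 ≤ |j| := abs_nonneg j
  rcases le_or_gt |j| k with h | h
  · nlinarith
  · have h2 : k + 1 ≤ |j| := by omega
    nlinarith

lemma aux_ns5 {k : ℤ} (hk : 1 ≤ k) : ¬ ∃ j : ℤ, (k * (k + 4)) * (k * (k + 1)) = j ^ 2 := by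
  rintro ⟨j, hj⟩
  have hk0 : k ≠ 0 := by omega
  have hdvd : k ∣ j := by
    have h2 : k ^ 2 ∣ j ^ 2 := ⟨(k + 4) * (k + 1), by linarith [hj]⟩
    exact (Int.pow_dvd_pow_iff two_ne_zero).mp h2
  obtain ⟨j', rfl⟩ := hdvd
  have : (k + 1) * (k + 4) = j' ^ 2 := by
    have h2 : k ^ 2 * ((k + 1) * (k + 4)) = k ^ 2 * j' ^ 2 := by ring_nf; ring_nf at hj; linarith
    exact mul_left_cancel₀ (pow_ne_zero 2 hk0) h2
  exact aux_ns3 hk ⟨j', this⟩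

lemma aux_irr_sqrt {d : ℤ} (h0 : 0 ≤ d) (h : ¬ ∃ j : ℤ, d = j ^ 2) :
    Irrational (Real.sqrt (d : ℝ)) :=
  (irrational_sqrt_intCast_iff_of_nonneg h0).mpr (fun ⟨r, hr⟩ => h ⟨r, by rw [hr, sq]⟩)

/-! ### Characteristic polynomial of a 2×2 real matrix and its roots -/

lemma aux_charpoly_fin2 (M : Matrix (Fin 2) (Fin 2) ℝ) :
    M.charpoly = X ^ 2 - C M.trace * X + C M.det := by
  rw [Matrix.charpoly, Matrix.det_fin_two]
  rw [Matrix.charmatrix_apply_eq, Matrix.charmatrix_apply_eq,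
    Matrix.charmatrix_apply_ne _ _ _ (by decide), Matrix.charmatrix_apply_ne _ _ _ (by decide),
    Matrix.trace_fin_two, Matrix.det_fin_two]
  simp only [map_add, map_mul, map_sub]
  ring

lemma aux_quad_roots (M : Matrix (Fin 2) (Fin 2) ℝ) (t : ℤ) (htr : M.trace = (t : ℝ))
    (hdet : M.det = 1) (hpos : 0 < t ^ 2 - 4) (hns : ¬ ∃ j : ℤ, t ^ 2 - 4 = j ^ 2) :
    ∃ x y : ℝ, x ≠ y ∧ Irrational x ∧ Irrational y ∧
      M.charpoly.IsRoot x ∧ M.charpoly.IsRoot y := by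
  set D : ℤ := t ^ 2 - 4 with hD
  have hD0 : (0 : ℝ) ≤ (D : ℝ) := by exact_mod_cast hpos.le
  set s : ℝ := Real.sqrt (D : ℝ) with hs
  have hs2 : s ^ 2 = (D : ℝ) := Real.sq_sqrt hD0
  have hspos : 0 < s := Real.sqrt_pos.mpr (by exact_mod_cast hpos)
  have hsirr : Irrational s := aux_irr_sqrt (by exact_mod_cast hpos.le) hns
  have hD' : (D : ℝ) = (t : ℝ) ^ 2 - 4 := by push_cast [hD]; ring
  refine ⟨((t : ℝ) + s) / 2, ((t : ℝ) - s) / 2, by intro h; nlinarith, ?_, ?_, ?_, ?_⟩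
  · rintro ⟨q, hq⟩
    exact hsirr ⟨2 * q - t, by push_cast; rw [hq]; ring⟩
  · rintro ⟨q, hq⟩
    exact hsirr ⟨t - 2 * q, by push_cast; rw [hq]; ring⟩
  · rw [aux_charpoly_fin2, htr, hdet]
    simp only [IsRoot, eval_add, eval_sub, eval_mul, eval_pow, eval_X, eval_C]
    nlinarith [hs2, hD']
  · rw [aux_charpoly_fin2, htr, hdet]
    simp only [IsRoot, eval_add, eval_sub, eval_mul, eval_pow, eval_X, eval_C]
    nlinarith [hs2, hD']

/-! ### Quadratic extensions generated by square roots -/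

lemma aux_integral {d : ℤ} (h0 : 0 ≤ d) : IsIntegral ℚ (Real.sqrt (d : ℝ)) := by
  refine ⟨X ^ 2 - C (d : ℚ), monic_X_pow_sub_C _ two_ne_zero, ?_⟩
  simp only [eval₂, eval₂_sub, eval₂_pow, eval₂_X, eval₂_C]
  have : Real.sqrt (d : ℝ) ^ 2 = (d : ℝ) := Real.sq_sqrt (by exact_mod_cast h0)
  simp [this]

lemma aux_two_le_natDegree {x : ℝ} (hx : IsIntegral ℚ x) (hirr : Irrational x) :
    2 ≤ (minpoly ℚ x).natDegree := by
  rw [minpoly.two_le_natDegree_iff hx]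
  rintro ⟨q, hq⟩
  exact hirr ⟨q, by rw [← hq, eq_ratCast (algebraMap ℚ ℝ) q]⟩

lemma aux_quad_finrank {d : ℤ} (h0 : 0 ≤ d) (hns : ¬ ∃ j : ℤ, d = j ^ 2) :
    Module.finrank ℚ (IntermediateField.adjoin ℚ {Real.sqrt (d : ℝ)}) = 2 := by
  rw [IntermediateField.adjoin.finrank (aux_integral h0)]
  have hirr : Irrational (Real.sqrt (d : ℝ)) := aux_irr_sqrt h0 hns
  refine le_antisymm ?_ (aux_two_le_natDegree (aux_integral h0) hirr)
  have hdvd : minpoly ℚ (Real.sqrt (d : ℝ)) ∣ X ^ 2 - C (d : ℚ) := by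
    apply minpoly.dvd
    have : Real.sqrt (d : ℝ) ^ 2 = (d : ℝ) := Real.sq_sqrt (by exact_mod_cast h0)
    simp [this]
  calc (minpoly ℚ (Real.sqrt (d : ℝ))).natDegree
      ≤ (X ^ 2 - C (d : ℚ)).natDegree :=
        natDegree_le_of_dvd hdvd ((monic_X_pow_sub_C _ two_ne_zero).ne_zero)
    _ = 2 := by rw [natDegree_X_pow_sub_C]

lemma aux_key_s10 (sa sb : ℝ) (a b : ℚ) (hsa : sa ^ 2 = (a : ℝ)) (hsb : sb ^ 2 = (b : ℝ))
    (hia : Irrational sa) (hib : Irrational sb) (hiab : Irrational (sa * sb))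
    (g0 g1 g2 : ℚ) (h : (g0 : ℝ) + (g1 : ℝ) * sa + (g2 : ℝ) * sb = 0) :
    g0 = 0 ∧ g1 = 0 ∧ g2 = 0 := by
  by_cases h2 : g2 = 0
  · subst h2
    by_cases h1 : g1 = 0
    · subst h1
      refine ⟨?_, rfl, rfl⟩
      have : (g0 : ℝ) = 0 := by push_cast at h; linarith
      exact_mod_cast this
    · exfalso
      refine hia ⟨-g0 / g1, ?_⟩
      have h1' : (g1 : ℝ) ≠ 0 := by exact_mod_cast h1
      push_cast
      field_simp
      push_cast at h
      linarith
  · exfalso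
    have h2' : (g2 : ℝ) ≠ 0 := by exact_mod_cast h2
    have hsq : (g2 : ℝ) ^ 2 * (b : ℝ) = ((g0 : ℝ) + g1 * sa) ^ 2 := by
      have hs : (g2 : ℝ) * sb = -((g0 : ℝ) + g1 * sa) := by linarith
      have := congrArg (· ^ 2) hs
      nlinarith [this, hsb]
    have hkey : 2 * (g0 : ℝ) * g1 * sa = g2 ^ 2 * b - g0 ^ 2 - g1 ^ 2 * a := by
      nlinarith [hsq, hsa]
    by_cases h0 : g0 = 0
    · subst h0
      by_cases h1 : g1 = 0
      · subst h1
        simp only [Rat.cast_zero, zero_add, zero_mul] at h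
        exact hib ⟨0, by simpa using (mul_eq_zero.mp h).resolve_left h2' |>.symm ▸ rfl⟩
      · have h1' : (g1 : ℝ) ≠ 0 := by exact_mod_cast h1
        refine hiab ⟨-(g1 / g2) * a, ?_⟩
        simp only [Rat.cast_zero, zero_add] at h
        have hsb' : sb = -((g1 : ℝ) * sa) / g2 := by field_simp; linarith
        push_cast
        rw [hsb']
        field_simp
        linear_combination hsa
    · by_cases h1 : g1 = 0
      · subst h1
        refine hib ⟨-g0 / g2, ?_⟩
        push_cast
        field_simp
        push_cast at h
        simp only [zero_mul, add_zero] at h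
        linarith
      · have h1' : (g1 : ℝ) ≠ 0 := by exact_mod_cast h1
        have h0' : (g0 : ℝ) ≠ 0 := by exact_mod_cast h0
        refine hia ⟨(g2 ^ 2 * b - g0 ^ 2 - g1 ^ 2 * a) / (2 * g0 * g1), ?_⟩
        push_cast
        field_simp
        linarith [hkey]

lemma aux_not_mem {a b : ℤ} (ha0 : 0 ≤ a) (hb0 : 0 ≤ b)
    (hia : ¬ ∃ j : ℤ, a = j ^ 2) (hib : ¬ ∃ j : ℤ, b = j ^ 2)
    (hiab : ¬ ∃ j : ℤ, a * b = j ^ 2) :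
    Real.sqrt (b : ℝ) ∉ IntermediateField.adjoin ℚ {Real.sqrt (a : ℝ)} := by
  intro hmem
  set sa := Real.sqrt (a : ℝ) with hsa_def
  set sb := Real.sqrt (b : ℝ) with hsb_def
  have hsa2 : sa ^ 2 = ((a : ℚ) : ℝ) := by
    rw [hsa_def]; push_cast; exact Real.sq_sqrt (by exact_mod_cast ha0)
  have hsb2 : sb ^ 2 = ((b : ℚ) : ℝ) := by
    rw [hsb_def]; push_cast; exact Real.sq_sqrt (by exact_mod_cast hb0)
  have hirra : Irrational sa := aux_irr_sqrt ha0 hia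
  have hirrb : Irrational sb := aux_irr_sqrt hb0 hib
  have hirrab : Irrational (sa * sb) := by
    have : sa * sb = Real.sqrt ((a * b : ℤ) : ℝ) := by
      rw [hsa_def, hsb_def, ← Real.sqrt_mul (by exact_mod_cast ha0)]
      push_cast; ring_nf
    rw [this]
    exact aux_irr_sqrt (mul_nonneg ha0 hb0) hiab
  haveI hfd : FiniteDimensional ℚ (IntermediateField.adjoin ℚ {sa}) :=
    IntermediateField.adjoin.finiteDimensional (aux_integral ha0)
  have hfr : Module.finrank ℚ (IntermediateField.adjoin ℚ {sa}) = 2 := aux_quad_finrank ha0 hia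
  set F := IntermediateField.adjoin ℚ {sa} with hF
  let v : Fin 3 → F := ![1, ⟨sa, IntermediateField.mem_adjoin_simple_self ℚ sa⟩, ⟨sb, hmem⟩]
  have hnli : ¬ LinearIndependent ℚ v := by
    intro hli
    have := hli.fintype_card_le_finrank
    rw [hfr] at this
    simp at this
  obtain ⟨g, hsum, i, hgi⟩ := Fintype.not_linearIndependent_iff.mp hnli
  have hcoe : (g 0 : ℝ) + (g 1 : ℝ) * sa + (g 2 : ℝ) * sb = 0 := by
    have h1 := congrArg (fun z : F => (z : ℝ)) hsum
    simp only [Fin.sum_univ_three] at h1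
    simp only [v, Matrix.cons_val_zero, Matrix.cons_val_one, Matrix.head_cons,
      Matrix.cons_val_two, Matrix.tail_cons] at h1
    push_cast at h1
    simpa [Rat.smul_def, mul_comm] using h1
  obtain ⟨h0, h1, h2⟩ := aux_key_s10 sa sb a b hsa2 hsb2 hirra hirrb hirrab (g 0) (g 1) (g 2) hcoe
  fin_cases i <;> simp_all

lemma aux_inf_bot (F₁ F₂ : IntermediateField ℚ ℝ) [FiniteDimensional ℚ F₁] [FiniteDimensional ℚ F₂]
    (hfr1 : Module.finrank ℚ F₁ = 2) (hfr2 : Module.finrank ℚ F₂ = 2) (hne : F₁ ≠ F₂) :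
    F₁ ⊓ F₂ = ⊥ := by
  by_contra hbot
  have hnle : ¬ (F₁ ⊓ F₂ ≤ ⊥) := fun hle => hbot (le_antisymm hle bot_le)
  obtain ⟨x, hx, hxb⟩ := SetLike.not_le_iff_exists.mp hnle
  have hx1 : x ∈ F₁ := hx.1
  have hx2 : x ∈ F₂ := hx.2
  have hxirr : Irrational x := by
    rintro ⟨q, hq⟩
    exact hxb (IntermediateField.mem_bot.mpr ⟨q, by rw [eq_ratCast (algebraMap ℚ ℝ) q, hq]⟩)
  have hxint : IsIntegral ℚ x :=
    IntermediateField.isIntegral_iff.mp (IsIntegral.of_finite ℚ (⟨x, hx1⟩ : F₁))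
  have hle1 : IntermediateField.adjoin ℚ {x} ≤ F₁ :=
    IntermediateField.adjoin_le_iff.mpr (by simpa using hx1)
  have hle2 : IntermediateField.adjoin ℚ {x} ≤ F₂ :=
    IntermediateField.adjoin_le_iff.mpr (by simpa using hx2)
  have hge : 2 ≤ Module.finrank ℚ (IntermediateField.adjoin ℚ {x}) := by
    rw [IntermediateField.adjoin.finrank hxint]
    exact aux_two_le_natDegree hxint hxirr
  have hle : Module.finrank ℚ (IntermediateField.adjoin ℚ {x}) ≤ Module.finrank ℚ F₁ := by
    haveI : Module.Finite ℚ (Subalgebra.toSubmodule F₁.toSubalgebra) :=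
      (inferInstance : FiniteDimensional ℚ F₁)
    exact Submodule.finrank_mono
      (show Subalgebra.toSubmodule (IntermediateField.adjoin ℚ {x}).toSubalgebra ≤
        Subalgebra.toSubmodule F₁.toSubalgebra by exact_mod_cast hle1)
  have hfr : Module.finrank ℚ (IntermediateField.adjoin ℚ {x}) = 2 := le_antisymm (hfr1 ▸ hle) hge
  have e1 : IntermediateField.adjoin ℚ {x} = F₁ :=
    IntermediateField.eq_of_le_of_finrank_eq hle1 (by rw [hfr, hfr1])
  have e2 : IntermediateField.adjoin ℚ {x} = F₂ :=
    IntermediateField.eq_of_le_of_finrank_eq hle2 (by rw [hfr, hfr2])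
  exact hne (e1 ▸ e2)

set_option maxHeartbeats 2000000 in
theorem stmt_10 (m n : ℤ) (hm : 2 ≤ m) (hn : 2 ≤ n)
    (k : ℤ) (hk : k = (m - 1) * (n - 1))
    (A B : Matrix (Fin 2) (Fin 2) ℤ)
    (hA : A = !![1 + k, 1 - n; 1 - m, 1])
    (hB : B = !![1 + 4 * k, 2 * (1 - n); 2 * (1 - m), 1])
    (F₁ F₂ : IntermediateField ℚ ℝ)
    (hF₁ : F₁ = IntermediateField.adjoin ℚ {Real.sqrt ((k * (k + 4) : ℤ) : ℝ)})
    (hF₂ : F₂ = IntermediateField.adjoin ℚ {Real.sqrt ((k * (k + 1) : ℤ) : ℝ)}) :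
    A.det = 1 ∧ B.det = 1 ∧
    A.trace = k + 2 ∧ B.trace = 4 * k + 2 ∧
    A.trace ^ 2 - 4 = k * (k + 4) ∧ B.trace ^ 2 - 4 = 16 * (k * (k + 1)) ∧
    0 < k * (k + 4) ∧ (¬ ∃ j : ℤ, k * (k + 4) = j ^ 2) ∧
    0 < 16 * (k * (k + 1)) ∧ (¬ ∃ j : ℤ, 16 * (k * (k + 1)) = j ^ 2) ∧
    (∃ x y : ℝ, x ≠ y ∧ Irrational x ∧ Irrational y ∧
      (Matrix.charpoly (A.map ((↑) : ℤ → ℝ))).IsRoot x ∧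
      (Matrix.charpoly (A.map ((↑) : ℤ → ℝ))).IsRoot y) ∧
    (∃ x y : ℝ, x ≠ y ∧ Irrational x ∧ Irrational y ∧
      (Matrix.charpoly (B.map ((↑) : ℤ → ℝ))).IsRoot x ∧
      (Matrix.charpoly (B.map ((↑) : ℤ → ℝ))).IsRoot y) ∧
    (¬ ∃ j : ℤ, (k + 1) * (k + 4) = j ^ 2) ∧
    Module.finrank ℚ F₁ = 2 ∧ Module.finrank ℚ F₂ = 2 ∧ F₁ ≠ F₂ ∧ F₁ ⊓ F₂ = ⊥ := by
  have hk1 : 1 ≤ k := by nlinarith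
  have hdetA : A.det = 1 := by rw [hA, Matrix.det_fin_two_of, hk]; ring
  have hdetB : B.det = 1 := by rw [hB, Matrix.det_fin_two_of, hk]; ring
  have htrA : A.trace = k + 2 := by rw [hA, Matrix.trace_fin_two_of]; ring
  have htrB : B.trace = 4 * k + 2 := by rw [hB, Matrix.trace_fin_two_of]; ring
  have hdA : A.trace ^ 2 - 4 = k * (k + 4) := by rw [htrA]; ring
  have hdB : B.trace ^ 2 - 4 = 16 * (k * (k + 1)) := by rw [htrB]; ring
  have hposA : 0 < k * (k + 4) := by nlinarith
  have hposB : 0 < 16 * (k * (k + 1)) := by nlinarith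
  have hnsA := aux_ns1 hk1
  have hnsB := aux_ns2 hk1
  -- mapped matrices
  have hkR : (k : ℝ) = ((m : ℝ) - 1) * ((n : ℝ) - 1) := by exact_mod_cast hk
  have hAmap : A.map ((↑) : ℤ → ℝ) =
      !![((1 + k : ℤ) : ℝ), ((1 - n : ℤ) : ℝ); ((1 - m : ℤ) : ℝ), ((1 : ℤ) : ℝ)] := by
    rw [hA]; ext i j; fin_cases i <;> fin_cases j <;> simp [Matrix.map_apply]
  have hBmap : B.map ((↑) : ℤ → ℝ) =
      !![((1 + 4 * k : ℤ) : ℝ), ((2 * (1 - n) : ℤ) : ℝ);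
         ((2 * (1 - m) : ℤ) : ℝ), ((1 : ℤ) : ℝ)] := by
    rw [hB]; ext i j; fin_cases i <;> fin_cases j <;> simp [Matrix.map_apply]
  have hdetA' : (A.map ((↑) : ℤ → ℝ)).det = 1 := by
    rw [hAmap, Matrix.det_fin_two_of]; push_cast; rw [hkR]; ring
  have hdetB' : (B.map ((↑) : ℤ → ℝ)).det = 1 := by
    rw [hBmap, Matrix.det_fin_two_of]; push_cast; rw [hkR]; ring
  have htrA' : (A.map ((↑) : ℤ → ℝ)).trace = ((k + 2 : ℤ) : ℝ) := by
    rw [hAmap, Matrix.trace_fin_two_of]; push_cast; ring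
  have htrB' : (B.map ((↑) : ℤ → ℝ)).trace = ((4 * k + 2 : ℤ) : ℝ) := by
    rw [hBmap, Matrix.trace_fin_two_of]; push_cast; ring
  have hrootsA : ∃ x y : ℝ, x ≠ y ∧ Irrational x ∧ Irrational y ∧
      (Matrix.charpoly (A.map ((↑) : ℤ → ℝ))).IsRoot x ∧
      (Matrix.charpoly (A.map ((↑) : ℤ → ℝ))).IsRoot y := by
    refine aux_quad_roots _ (k + 2) htrA' hdetA' (by nlinarith) ?_
    rintro ⟨j, hj⟩
    exact hnsA ⟨j, by linarith [hj]⟩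
  have hrootsB : ∃ x y : ℝ, x ≠ y ∧ Irrational x ∧ Irrational y ∧
      (Matrix.charpoly (B.map ((↑) : ℤ → ℝ))).IsRoot x ∧
      (Matrix.charpoly (B.map ((↑) : ℤ → ℝ))).IsRoot y := by
    refine aux_quad_roots _ (4 * k + 2) htrB' hdetB' (by nlinarith) ?_
    rintro ⟨j, hj⟩
    exact hnsB ⟨j, by linarith [hj]⟩
  -- field parts
  have ha0 : (0 : ℤ) ≤ k * (k + 4) := hposA.le
  have hb0 : (0 : ℤ) ≤ k * (k + 1) := by nlinarith
  have hnsb := aux_ns4 hk1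
  have hfr1 : Module.finrank ℚ F₁ = 2 := by
    have h := aux_quad_finrank ha0 hnsA
    rw [hF₁]; exact h
  have hfr2 : Module.finrank ℚ F₂ = 2 := by
    have h := aux_quad_finrank hb0 hnsb
    rw [hF₂]; exact h
  have hne : F₁ ≠ F₂ := by
    have h := aux_not_mem ha0 hb0 hnsA hnsb (aux_ns5 hk1)
    intro he
    refine h ?_
    rw [← hF₁, he, hF₂]
    exact IntermediateField.mem_adjoin_simple_self ℚ _
  haveI i1 : FiniteDimensional ℚ F₁ := by
    have h := IntermediateField.adjoin.finiteDimensional (aux_integral ha0)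
    rw [hF₁]; exact h
  haveI i2 : FiniteDimensional ℚ F₂ := by
    have h := IntermediateField.adjoin.finiteDimensional (aux_integral hb0)
    rw [hF₂]; exact h
  exact ⟨hdetA, hdetB, htrA, htrB, hdA, hdB, hposA, hnsA, hposB, hnsB, hrootsA, hrootsB,
    aux_ns3 hk1, hfr1, hfr2, hne, aux_inf_bot _ _ hfr1 hfr2 hne⟩
end

section
/- Let M_S and M_T be the linear maps of ℝ⁴ whose action on the standard orthonormal basis (ε₁, ε₂, ε₃, ε₄) is given by: M_S(ε₁) = ½(ε₁+ε₂+ε₃+ε₄), M_S(ε₂) = ½(ε₁+ε₂−ε₃−ε₄), M_S(ε₃) = ½(−ε₁+ε₂+ε₃−ε₄), M_S(ε₄) = ½(−ε₁+ε₂−ε₃+ε₄); and M_T(ε₁) = ½(ε₁+ε₂+ε₃−ε₄), M_T(ε₂) = ½(−ε₁+ε₂+ε₃+ε₄), M_T(ε₃) = ½(ε₁−ε₂+ε₃+ε₄), M_T(ε₄) = ½(ε₁+ε₂−ε₃+ε₄). Then M_S and M_T are orthogonal transformations of ℝ⁴ (they preserve the standard inner product), each maps the root system R = {±ε_a ± ε_b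 : 1 ≤ a < b ≤ 4} of type D₄ bijectively onto itself, and consequently the subgroup of GL(4,ℝ) generated by M_S and M_T is finite. -/
/-- The standard basis vector `ε i` of `ℝ⁴`. -/
def epsBasis (i : Fin 4) : Fin 4 → ℝ := Pi.single i 1

/-- The root system `R = {±ε_a ± ε_b : 1 ≤ a < b ≤ 4}` of type `D₄` in `ℝ⁴`. -/
def D4Roots : Set (Fin 4 → ℝ) :=
  {v | ∃ a b : Fin 4, a < b ∧
    (v = epsBasis a + epsBasis b ∨ v = epsBasis a - epsBasis b ∨
      v = -epsBasis a + epsBasis b ∨ v = -epsBasis a - epsBasis b)}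

set_option maxHeartbeats 1600000 in
/-- The two explicit linear maps `M_S`, `M_T` of `ℝ⁴` are orthogonal, map the
`D₄` root system bijectively onto itself, and generate a finite subgroup of `GL(4, ℝ)`. -/
theorem stmt_11 (MS MT : (Fin 4 → ℝ) →ₗ[ℝ] (Fin 4 → ℝ))
    (hS1 : MS (epsBasis 0) = (1 / 2 : ℝ) • (epsBasis 0 + epsBasis 1 + epsBasis 2 + epsBasis 3))
    (hS2 : MS (epsBasis 1) = (1 / 2 : ℝ) • (epsBasis 0 + epsBasis 1 - epsBasis 2 - epsBasis 3))
    (hS3 : MS (epsBasis 2) = (1 / 2 : ℝ) • (-epsBasis 0 + epsBasis 1 + epsBasis 2 - epsBasis 3))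
    (hS4 : MS (epsBasis 3) = (1 / 2 : ℝ) • (-epsBasis 0 + epsBasis 1 - epsBasis 2 + epsBasis 3))
    (hT1 : MT (epsBasis 0) = (1 / 2 : ℝ) • (epsBasis 0 + epsBasis 1 + epsBasis 2 - epsBasis 3))
    (hT2 : MT (epsBasis 1) = (1 / 2 : ℝ) • (-epsBasis 0 + epsBasis 1 + epsBasis 2 + epsBasis 3))
    (hT3 : MT (epsBasis 2) = (1 / 2 : ℝ) • (epsBasis 0 - epsBasis 1 + epsBasis 2 + epsBasis 3))
    (hT4 : MT (epsBasis 3) = (1 / 2 : ℝ) • (epsBasis 0 + epsBasis 1 - epsBasis 2 + epsBasis 3)) :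
    (∀ x y : Fin 4 → ℝ, ∑ i, MS x i * MS y i = ∑ i, x i * y i) ∧
    (∀ x y : Fin 4 → ℝ, ∑ i, MT x i * MT y i = ∑ i, x i * y i) ∧
    Set.BijOn (fun v => MS v) D4Roots D4Roots ∧
    Set.BijOn (fun v => MT v) D4Roots D4Roots ∧
    (∃ uS uT : (Module.End ℝ (Fin 4 → ℝ))ˣ,
      (uS : Module.End ℝ (Fin 4 → ℝ)) = MS ∧ (uT : Module.End ℝ (Fin 4 → ℝ)) = MT ∧
      Set.Finite ((Subgroup.closure {uS, uT} : Subgroup (Module.End ℝ (Fin 4 → ℝ))ˣ) :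
        Set (Module.End ℝ (Fin 4 → ℝ))ˣ)) := by
  -- decomposition of a vector along the standard basis
  have hxdec : ∀ x : Fin 4 → ℝ,
      x = x 0 • epsBasis 0 + x 1 • epsBasis 1 + x 2 • epsBasis 2 + x 3 • epsBasis 3 := by
    intro x; funext i; fin_cases i <;> simp [epsBasis]
  -- explicit coordinate formulas
  have hMS : ∀ x : Fin 4 → ℝ, MS x = ![(x 0 + x 1 - x 2 - x 3)/2, (x 0 + x 1 + x 2 + x 3)/2,
      (x 0 - x 1 + x 2 - x 3)/2, (x 0 - x 1 - x 2 + x 3)/2] := by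
    intro x
    conv_lhs => rw [hxdec x]
    simp only [map_add, map_smul, hS1, hS2, hS3, hS4]
    funext i
    fin_cases i <;> simp [epsBasis, Pi.single_apply] <;> ring
  have hMT : ∀ x : Fin 4 → ℝ, MT x = ![(x 0 - x 1 + x 2 + x 3)/2, (x 0 + x 1 - x 2 + x 3)/2,
      (x 0 + x 1 + x 2 - x 3)/2, (-x 0 + x 1 + x 2 + x 3)/2] := by
    intro x
    conv_lhs => rw [hxdec x]
    simp only [map_add, map_smul, hT1, hT2, hT3, hT4]
    funext i
    fin_cases i <;> simp [epsBasis, Pi.single_apply] <;> ring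
  -- orthogonality
  have horthS : ∀ x y : Fin 4 → ℝ, ∑ i, MS x i * MS y i = ∑ i, x i * y i := by
    intro x y
    rw [hMS x, hMS y]
    simp [Fin.sum_univ_four]
    ring
  have horthT : ∀ x y : Fin 4 → ℝ, ∑ i, MT x i * MT y i = ∑ i, x i * y i := by
    intro x y
    rw [hMT x, hMT y]
    simp [Fin.sum_univ_four]
    ring
  -- injectivity from orthogonality
  have hinj : ∀ L : (Fin 4 → ℝ) →ₗ[ℝ] (Fin 4 → ℝ),
      (∀ x y : Fin 4 → ℝ, ∑ i, L x i * L y i = ∑ i, x i * y i) → Function.Injective L := by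
    intro L horth x y hxy
    have h0 : L (x - y) = 0 := by rw [map_sub, hxy, sub_self]
    have h1 : ∑ i, (x - y) i * (x - y) i = 0 := by
      rw [← horth, h0]; simp
    have h2 : ∀ i : Fin 4, (x - y) i = 0 := by
      intro i
      have := (Finset.sum_eq_zero_iff_of_nonneg
        (fun i _ => mul_self_nonneg ((x - y) i))).mp h1 i (Finset.mem_univ i)
      exact mul_self_eq_zero.mp this
    have h3 : x - y = 0 := funext h2
    exact sub_eq_zero.mp h3
  have hinjS := hinj MS horthS
  have hinjT := hinj MT horthT
  -- finiteness of the root system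
  have hfin : D4Roots.Finite := by
    have hsub : D4Roots ⊆ Set.range (fun p : (Fin 4 × Fin 4) × Bool × Bool =>
        (if p.2.1 then epsBasis p.1.1 else -epsBasis p.1.1) +
        (if p.2.2 then epsBasis p.1.2 else -epsBasis p.1.2)) := by
      rintro v ⟨a, b, _, (rfl | rfl | rfl | rfl)⟩
      · exact ⟨((a, b), true, true), by simp⟩
      · exact ⟨((a, b), true, false), by simp [sub_eq_add_neg]⟩
      · exact ⟨((a, b), false, true), by simp⟩
      · exact ⟨((a, b), false, false), by simp [sub_eq_add_neg]⟩
    exact (Set.finite_range _).subset hsub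
  -- images of roots under MS and MT are roots
  have hmemS : ∀ v ∈ D4Roots, MS v ∈ D4Roots := by
    have hS01pp : MS (epsBasis 0 + epsBasis 1) ∈ D4Roots :=
    ⟨0, 1, by decide, Or.inl (by simp only [map_add, map_sub, map_neg, hS1, hS2, hS3, hS4]; module)⟩
    have hS01pm : MS (epsBasis 0 - epsBasis 1) ∈ D4Roots :=
    ⟨2, 3, by decide, Or.inl (by simp only [map_add, map_sub, map_neg, hS1, hS2, hS3, hS4]; module)⟩
    have hS01mp : MS (-epsBasis 0 + epsBasis 1) ∈ D4Roots :=
    ⟨2, 3, by decide, Or.inr (Or.inr (Or.inr (by simp only [map_add, map_sub, map_neg, hS1, hS2, hS3, hS4]; module)))⟩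
    have hS01mm : MS (-epsBasis 0 - epsBasis 1) ∈ D4Roots :=
    ⟨0, 1, by decide, Or.inr (Or.inr (Or.inr (by simp only [map_add, map_sub, map_neg, hS1, hS2, hS3, hS4]; module)))⟩
    have hS02pp : MS (epsBasis 0 + epsBasis 2) ∈ D4Roots :=
    ⟨1, 2, by decide, Or.inl (by simp only [map_add, map_sub, map_neg, hS1, hS2, hS3, hS4]; module)⟩
    have hS02pm : MS (epsBasis 0 - epsBasis 2) ∈ D4Roots :=
    ⟨0, 3, by decide, Or.inl (by simp only [map_add, map_sub, map_neg, hS1, hS2, hS3, hS4]; module)⟩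
    have hS02mp : MS (-epsBasis 0 + epsBasis 2) ∈ D4Roots :=
    ⟨0, 3, by decide, Or.inr (Or.inr (Or.inr (by simp only [map_add, map_sub, map_neg, hS1, hS2, hS3, hS4]; module)))⟩
    have hS02mm : MS (-epsBasis 0 - epsBasis 2) ∈ D4Roots :=
    ⟨1, 2, by decide, Or.inr (Or.inr (Or.inr (by simp only [map_add, map_sub, map_neg, hS1, hS2, hS3, hS4]; module)))⟩
    have hS03pp : MS (epsBasis 0 + epsBasis 3) ∈ D4Roots :=
    ⟨1, 3, by decide, Or.inl (by simp only [map_add, map_sub, map_neg, hS1, hS2, hS3, hS4]; module)⟩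
    have hS03pm : MS (epsBasis 0 - epsBasis 3) ∈ D4Roots :=
    ⟨0, 2, by decide, Or.inl (by simp only [map_add, map_sub, map_neg, hS1, hS2, hS3, hS4]; module)⟩
    have hS03mp : MS (-epsBasis 0 + epsBasis 3) ∈ D4Roots :=
    ⟨0, 2, by decide, Or.inr (Or.inr (Or.inr (by simp only [map_add, map_sub, map_neg, hS1, hS2, hS3, hS4]; module)))⟩
    have hS03mm : MS (-epsBasis 0 - epsBasis 3) ∈ D4Roots :=
    ⟨1, 3, by decide, Or.inr (Or.inr (Or.inr (by simp only [map_add, map_sub, map_neg, hS1, hS2, hS3, hS4]; module)))⟩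
    have hS12pp : MS (epsBasis 1 + epsBasis 2) ∈ D4Roots :=
    ⟨1, 3, by decide, Or.inr (Or.inl (by simp only [map_add, map_sub, map_neg, hS1, hS2, hS3, hS4]; module))⟩
    have hS12pm : MS (epsBasis 1 - epsBasis 2) ∈ D4Roots :=
    ⟨0, 2, by decide, Or.inr (Or.inl (by simp only [map_add, map_sub, map_neg, hS1, hS2, hS3, hS4]; module))⟩
    have hS12mp : MS (-epsBasis 1 + epsBasis 2) ∈ D4Roots :=
    ⟨0, 2, by decide, Or.inr (Or.inr (Or.inl (by simp only [map_add, map_sub, map_neg, hS1, hS2, hS3, hS4]; module)))⟩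
    have hS12mm : MS (-epsBasis 1 - epsBasis 2) ∈ D4Roots :=
    ⟨1, 3, by decide, Or.inr (Or.inr (Or.inl (by simp only [map_add, map_sub, map_neg, hS1, hS2, hS3, hS4]; module)))⟩
    have hS13pp : MS (epsBasis 1 + epsBasis 3) ∈ D4Roots :=
    ⟨1, 2, by decide, Or.inr (Or.inl (by simp only [map_add, map_sub, map_neg, hS1, hS2, hS3, hS4]; module))⟩
    have hS13pm : MS (epsBasis 1 - epsBasis 3) ∈ D4Roots :=
    ⟨0, 3, by decide, Or.inr (Or.inl (by simp only [map_add, map_sub, map_neg, hS1, hS2, hS3, hS4]; module))⟩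
    have hS13mp : MS (-epsBasis 1 + epsBasis 3) ∈ D4Roots :=
    ⟨0, 3, by decide, Or.inr (Or.inr (Or.inl (by simp only [map_add, map_sub, map_neg, hS1, hS2, hS3, hS4]; module)))⟩
    have hS13mm : MS (-epsBasis 1 - epsBasis 3) ∈ D4Roots :=
    ⟨1, 2, by decide, Or.inr (Or.inr (Or.inl (by simp only [map_add, map_sub, map_neg, hS1, hS2, hS3, hS4]; module)))⟩
    have hS23pp : MS (epsBasis 2 + epsBasis 3) ∈ D4Roots :=
    ⟨0, 1, by decide, Or.inr (Or.inr (Or.inl (by simp only [map_add, map_sub, map_neg, hS1, hS2, hS3, hS4]; module)))⟩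
    have hS23pm : MS (epsBasis 2 - epsBasis 3) ∈ D4Roots :=
    ⟨2, 3, by decide, Or.inr (Or.inl (by simp only [map_add, map_sub, map_neg, hS1, hS2, hS3, hS4]; module))⟩
    have hS23mp : MS (-epsBasis 2 + epsBasis 3) ∈ D4Roots :=
    ⟨2, 3, by decide, Or.inr (Or.inr (Or.inl (by simp only [map_add, map_sub, map_neg, hS1, hS2, hS3, hS4]; module)))⟩
    have hS23mm : MS (-epsBasis 2 - epsBasis 3) ∈ D4Roots :=
    ⟨0, 1, by decide, Or.inr (Or.inl (by simp only [map_add, map_sub, map_neg, hS1, hS2, hS3, hS4]; module))⟩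
    rintro v ⟨a, b, hab, (rfl | rfl | rfl | rfl)⟩ <;> fin_cases a <;> fin_cases b
    exacts [absurd hab (by decide),
      hS01pp,
      hS02pp,
      hS03pp,
      absurd hab (by decide),
      absurd hab (by decide),
      hS12pp,
      hS13pp,
      absurd hab (by decide),
      absurd hab (by decide),
      absurd hab (by decide),
      hS23pp,
      absurd hab (by decide),
      absurd hab (by decide),
      absurd hab (by decide),
      absurd hab (by decide),
      absurd hab (by decide),
      hS01pm,
      hS02pm,
      hS03pm,
      absurd hab (by decide),
      absurd hab (by decide),
      hS12pm,
      hS13pm,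
      absurd hab (by decide),
      absurd hab (by decide),
      absurd hab (by decide),
      hS23pm,
      absurd hab (by decide),
      absurd hab (by decide),
      absurd hab (by decide),
      absurd hab (by decide),
      absurd hab (by decide),
      hS01mp,
      hS02mp,
      hS03mp,
      absurd hab (by decide),
      absurd hab (by decide),
      hS12mp,
      hS13mp,
      absurd hab (by decide),
      absurd hab (by decide),
      absurd hab (by decide),
      hS23mp,
      absurd hab (by decide),
      absurd hab (by decide),
      absurd hab (by decide),
      absurd hab (by decide),
      absurd hab (by decide),
      hS01mm,
      hS02mm,
      hS03mm,
      absurd hab (by decide),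
      absurd hab (by decide),
      hS12mm,
      hS13mm,
      absurd hab (by decide),
      absurd hab (by decide),
      absurd hab (by decide),
      hS23mm,
      absurd hab (by decide),
      absurd hab (by decide),
      absurd hab (by decide),
      absurd hab (by decide)]
  have hmemT : ∀ v ∈ D4Roots, MT v ∈ D4Roots := by
    have hT01pp : MT (epsBasis 0 + epsBasis 1) ∈ D4Roots :=
    ⟨1, 2, by decide, Or.inl (by simp only [map_add, map_sub, map_neg, hT1, hT2, hT3, hT4]; module)⟩
    have hT01pm : MT (epsBasis 0 - epsBasis 1) ∈ D4Roots :=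
    ⟨0, 3, by decide, Or.inr (Or.inl (by simp only [map_add, map_sub, map_neg, hT1, hT2, hT3, hT4]; module))⟩
    have hT01mp : MT (-epsBasis 0 + epsBasis 1) ∈ D4Roots :=
    ⟨0, 3, by decide, Or.inr (Or.inr (Or.inl (by simp only [map_add, map_sub, map_neg, hT1, hT2, hT3, hT4]; module)))⟩
    have hT01mm : MT (-epsBasis 0 - epsBasis 1) ∈ D4Roots :=
    ⟨1, 2, by decide, Or.inr (Or.inr (Or.inr (by simp only [map_add, map_sub, map_neg, hT1, hT2, hT3, hT4]; module)))⟩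
    have hT02pp : MT (epsBasis 0 + epsBasis 2) ∈ D4Roots :=
    ⟨0, 2, by decide, Or.inl (by simp only [map_add, map_sub, map_neg, hT1, hT2, hT3, hT4]; module)⟩
    have hT02pm : MT (epsBasis 0 - epsBasis 2) ∈ D4Roots :=
    ⟨1, 3, by decide, Or.inr (Or.inl (by simp only [map_add, map_sub, map_neg, hT1, hT2, hT3, hT4]; module))⟩
    have hT02mp : MT (-epsBasis 0 + epsBasis 2) ∈ D4Roots :=
    ⟨1, 3, by decide, Or.inr (Or.inr (Or.inl (by simp only [map_add, map_sub, map_neg, hT1, hT2, hT3, hT4]; module)))⟩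
    have hT02mm : MT (-epsBasis 0 - epsBasis 2) ∈ D4Roots :=
    ⟨0, 2, by decide, Or.inr (Or.inr (Or.inr (by simp only [map_add, map_sub, map_neg, hT1, hT2, hT3, hT4]; module)))⟩
    have hT03pp : MT (epsBasis 0 + epsBasis 3) ∈ D4Roots :=
    ⟨0, 1, by decide, Or.inl (by simp only [map_add, map_sub, map_neg, hT1, hT2, hT3, hT4]; module)⟩
    have hT03pm : MT (epsBasis 0 - epsBasis 3) ∈ D4Roots :=
    ⟨2, 3, by decide, Or.inr (Or.inl (by simp only [map_add, map_sub, map_neg, hT1, hT2, hT3, hT4]; module))⟩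
    have hT03mp : MT (-epsBasis 0 + epsBasis 3) ∈ D4Roots :=
    ⟨2, 3, by decide, Or.inr (Or.inr (Or.inl (by simp only [map_add, map_sub, map_neg, hT1, hT2, hT3, hT4]; module)))⟩
    have hT03mm : MT (-epsBasis 0 - epsBasis 3) ∈ D4Roots :=
    ⟨0, 1, by decide, Or.inr (Or.inr (Or.inr (by simp only [map_add, map_sub, map_neg, hT1, hT2, hT3, hT4]; module)))⟩
    have hT12pp : MT (epsBasis 1 + epsBasis 2) ∈ D4Roots :=
    ⟨2, 3, by decide, Or.inl (by simp only [map_add, map_sub, map_neg, hT1, hT2, hT3, hT4]; module)⟩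
    have hT12pm : MT (epsBasis 1 - epsBasis 2) ∈ D4Roots :=
    ⟨0, 1, by decide, Or.inr (Or.inr (Or.inl (by simp only [map_add, map_sub, map_neg, hT1, hT2, hT3, hT4]; module)))⟩
    have hT12mp : MT (-epsBasis 1 + epsBasis 2) ∈ D4Roots :=
    ⟨0, 1, by decide, Or.inr (Or.inl (by simp only [map_add, map_sub, map_neg, hT1, hT2, hT3, hT4]; module))⟩
    have hT12mm : MT (-epsBasis 1 - epsBasis 2) ∈ D4Roots :=
    ⟨2, 3, by decide, Or.inr (Or.inr (Or.inr (by simp only [map_add, map_sub, map_neg, hT1, hT2, hT3, hT4]; module)))⟩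
    have hT13pp : MT (epsBasis 1 + epsBasis 3) ∈ D4Roots :=
    ⟨1, 3, by decide, Or.inl (by simp only [map_add, map_sub, map_neg, hT1, hT2, hT3, hT4]; module)⟩
    have hT13pm : MT (epsBasis 1 - epsBasis 3) ∈ D4Roots :=
    ⟨0, 2, by decide, Or.inr (Or.inr (Or.inl (by simp only [map_add, map_sub, map_neg, hT1, hT2, hT3, hT4]; module)))⟩
    have hT13mp : MT (-epsBasis 1 + epsBasis 3) ∈ D4Roots :=
    ⟨0, 2, by decide, Or.inr (Or.inl (by simp only [map_add, map_sub, map_neg, hT1, hT2, hT3, hT4]; module))⟩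
    have hT13mm : MT (-epsBasis 1 - epsBasis 3) ∈ D4Roots :=
    ⟨1, 3, by decide, Or.inr (Or.inr (Or.inr (by simp only [map_add, map_sub, map_neg, hT1, hT2, hT3, hT4]; module)))⟩
    have hT23pp : MT (epsBasis 2 + epsBasis 3) ∈ D4Roots :=
    ⟨0, 3, by decide, Or.inl (by simp only [map_add, map_sub, map_neg, hT1, hT2, hT3, hT4]; module)⟩
    have hT23pm : MT (epsBasis 2 - epsBasis 3) ∈ D4Roots :=
    ⟨1, 2, by decide, Or.inr (Or.inr (Or.inl (by simp only [map_add, map_sub, map_neg, hT1, hT2, hT3, hT4]; module)))⟩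
    have hT23mp : MT (-epsBasis 2 + epsBasis 3) ∈ D4Roots :=
    ⟨1, 2, by decide, Or.inr (Or.inl (by simp only [map_add, map_sub, map_neg, hT1, hT2, hT3, hT4]; module))⟩
    have hT23mm : MT (-epsBasis 2 - epsBasis 3) ∈ D4Roots :=
    ⟨0, 3, by decide, Or.inr (Or.inr (Or.inr (by simp only [map_add, map_sub, map_neg, hT1, hT2, hT3, hT4]; module)))⟩
    rintro v ⟨a, b, hab, (rfl | rfl | rfl | rfl)⟩ <;> fin_cases a <;> fin_cases b
    exacts [absurd hab (by decide),
      hT01pp,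
      hT02pp,
      hT03pp,
      absurd hab (by decide),
      absurd hab (by decide),
      hT12pp,
      hT13pp,
      absurd hab (by decide),
      absurd hab (by decide),
      absurd hab (by decide),
      hT23pp,
      absurd hab (by decide),
      absurd hab (by decide),
      absurd hab (by decide),
      absurd hab (by decide),
      absurd hab (by decide),
      hT01pm,
      hT02pm,
      hT03pm,
      absurd hab (by decide),
      absurd hab (by decide),
      hT12pm,
      hT13pm,
      absurd hab (by decide),
      absurd hab (by decide),
      absurd hab (by decide),
      hT23pm,
      absurd hab (by decide),
      absurd hab (by decide),
      absurd hab (by decide),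
      absurd hab (by decide),
      absurd hab (by decide),
      hT01mp,
      hT02mp,
      hT03mp,
      absurd hab (by decide),
      absurd hab (by decide),
      hT12mp,
      hT13mp,
      absurd hab (by decide),
      absurd hab (by decide),
      absurd hab (by decide),
      hT23mp,
      absurd hab (by decide),
      absurd hab (by decide),
      absurd hab (by decide),
      absurd hab (by decide),
      absurd hab (by decide),
      hT01mm,
      hT02mm,
      hT03mm,
      absurd hab (by decide),
      absurd hab (by decide),
      hT12mm,
      hT13mm,
      absurd hab (by decide),
      absurd hab (by decide),
      absurd hab (by decide),
      hT23mm,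
      absurd hab (by decide),
      absurd hab (by decide),
      absurd hab (by decide),
      absurd hab (by decide)]
  -- bijectivity on the root system
  have bijS : Set.BijOn (fun v => MS v) D4Roots D4Roots :=
    (hfin.injOn_iff_bijOn_of_mapsTo (fun v hv => hmemS v hv)).mp hinjS.injOn
  have bijT : Set.BijOn (fun v => MT v) D4Roots D4Roots :=
    (hfin.injOn_iff_bijOn_of_mapsTo (fun v hv => hmemT v hv)).mp hinjT.injOn
  -- MS and MT are units of the endomorphism ring
  have hbijS : Function.Bijective MS := ⟨hinjS, LinearMap.injective_iff_surjective.mp hinjS⟩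
  have hbijT : Function.Bijective MT := ⟨hinjT, LinearMap.injective_iff_surjective.mp hinjT⟩
  have hUS : IsUnit (MS : Module.End ℝ (Fin 4 → ℝ)) := (Module.End.isUnit_iff MS).mpr hbijS
  have hUT : IsUnit (MT : Module.End ℝ (Fin 4 → ℝ)) := (Module.End.isUnit_iff MT).mpr hbijT
  obtain ⟨uS, hSspec⟩ := hUS
  obtain ⟨uT, hTspec⟩ := hUT
  -- the inverses also preserve the root system
  have hinv : ∀ (u : (Module.End ℝ (Fin 4 → ℝ))ˣ) (L : (Fin 4 → ℝ) →ₗ[ℝ] (Fin 4 → ℝ)),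
      (u : Module.End ℝ (Fin 4 → ℝ)) = L → Set.BijOn (fun v => L v) D4Roots D4Roots →
      ∀ v ∈ D4Roots, ((u⁻¹ : (Module.End ℝ (Fin 4 → ℝ))ˣ) : Module.End ℝ (Fin 4 → ℝ)) v ∈ D4Roots := by
    intro u L hu hbij v hv
    obtain ⟨w, hw, hww⟩ := hbij.surjOn hv
    have key : ((u⁻¹ : (Module.End ℝ (Fin 4 → ℝ))ˣ) : Module.End ℝ (Fin 4 → ℝ)) v = w := by
      rw [← hww]
      show ((u⁻¹ : (Module.End ℝ (Fin 4 → ℝ))ˣ) : Module.End ℝ (Fin 4 → ℝ)) (L w) = w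
      rw [← hu, ← Module.End.mul_apply, ← Units.val_mul, inv_mul_cancel, Units.val_one,
        Module.End.one_apply]
    rw [key]; exact hw
  have hinvS := hinv uS MS hSspec bijS
  have hinvT := hinv uT MT hTspec bijT
  -- every element of the generated group preserves the root system
  have hAll : ∀ u ∈ Subgroup.closure ({uS, uT} : Set (Module.End ℝ (Fin 4 → ℝ))ˣ),
      ∀ v ∈ D4Roots, ((u : (Module.End ℝ (Fin 4 → ℝ))ˣ) : Module.End ℝ (Fin 4 → ℝ)) v ∈ D4Roots := by
    intro u hu
    refine (Subgroup.closure_induction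
      (p := fun g _ => (∀ v ∈ D4Roots, ((g : (Module.End ℝ (Fin 4 → ℝ))ˣ) : Module.End ℝ (Fin 4 → ℝ)) v ∈ D4Roots)
        ∧ (∀ v ∈ D4Roots, ((g⁻¹ : (Module.End ℝ (Fin 4 → ℝ))ˣ) : Module.End ℝ (Fin 4 → ℝ)) v ∈ D4Roots))
      ?_ ?_ ?_ ?_ hu).1
    · rintro x (rfl | rfl)
      · exact ⟨by rw [hSspec]; exact hmemS, hinvS⟩
      · exact ⟨by rw [hTspec]; exact hmemT, hinvT⟩
    · constructor <;> intro v hv <;> simpa using hv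
    · rintro x y hx hy ⟨hx1, hx2⟩ ⟨hy1, hy2⟩
      constructor
      · intro v hv
        rw [Units.val_mul, Module.End.mul_apply]
        exact hx1 _ (hy1 _ hv)
      · intro v hv
        rw [mul_inv_rev, Units.val_mul, Module.End.mul_apply]
        exact hy2 _ (hx2 _ hv)
    · rintro x hx ⟨hx1, hx2⟩
      exact ⟨hx2, by rw [inv_inv]; exact hx1⟩
  -- two endomorphisms agreeing on the root system are equal
  have ext_of_roots : ∀ f g : Module.End ℝ (Fin 4 → ℝ),
      (∀ v ∈ D4Roots, f v = g v) → f = g := by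
    intro f g h
    have h1 := h _ ⟨0, 1, by decide, Or.inl rfl⟩
    have h2 := h _ ⟨0, 1, by decide, Or.inr (Or.inl rfl)⟩
    have h3 := h _ ⟨2, 3, by decide, Or.inl rfl⟩
    have h4 := h _ ⟨2, 3, by decide, Or.inr (Or.inl rfl)⟩
    have k0 : f (epsBasis 0) = g (epsBasis 0) := by
      rw [show epsBasis 0 = (1/2 : ℝ) • ((epsBasis 0 + epsBasis 1) + (epsBasis 0 - epsBasis 1))
            from by module]
      simp only [map_smul, map_add, map_sub, h1, h2]
    have k1 : f (epsBasis 1) = g (epsBasis 1) := by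
      rw [show epsBasis 1 = (1/2 : ℝ) • ((epsBasis 0 + epsBasis 1) - (epsBasis 0 - epsBasis 1))
            from by module]
      simp only [map_smul, map_add, map_sub, h1, h2]
    have k2 : f (epsBasis 2) = g (epsBasis 2) := by
      rw [show epsBasis 2 = (1/2 : ℝ) • ((epsBasis 2 + epsBasis 3) + (epsBasis 2 - epsBasis 3))
            from by module]
      simp only [map_smul, map_add, map_sub, h3, h4]
    have k3 : f (epsBasis 3) = g (epsBasis 3) := by
      rw [show epsBasis 3 = (1/2 : ℝ) • ((epsBasis 2 + epsBasis 3) - (epsBasis 2 - epsBasis 3))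
            from by module]
      simp only [map_smul, map_add, map_sub, h3, h4]
    apply LinearMap.ext
    intro x
    conv_lhs => rw [hxdec x]
    conv_rhs => rw [hxdec x]
    simp only [map_add, map_smul, k0, k1, k2, k3]
  -- the generated subgroup is finite
  haveI : Finite ↥D4Roots := hfin.to_subtype
  have hfinite : Set.Finite ((Subgroup.closure ({uS, uT} : Set (Module.End ℝ (Fin 4 → ℝ))ˣ) :
      Subgroup (Module.End ℝ (Fin 4 → ℝ))ˣ) : Set (Module.End ℝ (Fin 4 → ℝ))ˣ) := by
    set C : Set (Module.End ℝ (Fin 4 → ℝ))ˣ :=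
      ((Subgroup.closure ({uS, uT} : Set (Module.End ℝ (Fin 4 → ℝ))ˣ)) :
        Set (Module.End ℝ (Fin 4 → ℝ))ˣ) with hC
    let F : (Module.End ℝ (Fin 4 → ℝ))ˣ → (↥D4Roots → (Fin 4 → ℝ)) :=
      fun u r => ((u : (Module.End ℝ (Fin 4 → ℝ))ˣ) : Module.End ℝ (Fin 4 → ℝ)) (r : Fin 4 → ℝ)
    have himg : F '' C ⊆ Set.range
        (fun g : ↥D4Roots → ↥D4Roots => fun r => ((g r : Fin 4 → ℝ))) := by
      rintro _ ⟨u, hu, rfl⟩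
      exact ⟨fun r => ⟨F u r, hAll u hu (r : Fin 4 → ℝ) r.2⟩, rfl⟩
    have hinjF : Set.InjOn F C := by
      intro u hu v hv huv
      have : ((u : (Module.End ℝ (Fin 4 → ℝ))ˣ) : Module.End ℝ (Fin 4 → ℝ))
          = ((v : (Module.End ℝ (Fin 4 → ℝ))ˣ) : Module.End ℝ (Fin 4 → ℝ)) :=
        ext_of_roots _ _ (fun r hr => congrFun huv ⟨r, hr⟩)
      exact Units.ext this
    exact Set.Finite.of_finite_image ((Set.finite_range _).subset himg) hinjF
  exact ⟨horthS, horthT, bijS, bijT, uS, uT, hSspec, hTspec, hfinite⟩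
end
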